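/- arXiv:2012.00159 — 5 statements merged into one kernel-verified Lean document; each statement's English description precedes it below -/
import Mathlib

section
/- Let d, k, n be positive integers with d ≤ kn, let U be any unitary matrix in M_{kn}(ℂ), let P be the canonical injection ℂ^d → ℂ^{kn}, and let Φ(X) = (id_k ⊗ tr_n)(U P X P* U*). Let K be a nonempty convex compact subset of D_k and let ε > 0. If for every A ∈ D_k one has ‖P* U* (A ⊗ I_n) U P‖ ≤ max_{X ∈ K} tr(XA) + ε/k, then Φ(D_d) ⊆ K + ε, where K + ε = { Y ∈ D_k : ∃ X ∈ K, ‖X − Y‖₂ ≤ ε }. -/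
open scoped Kronecker ComplexOrder
open MeasureTheory Matrix

noncomputable section

/-- Density matrices: positive semidefinite with trace 1. -/
def IsDensity {m : Type*} [Fintype m] (X : Matrix m m ℂ) : Prop :=
  X.PosSemidef ∧ X.trace = 1

/-- Operator norm of a square complex matrix. -/
noncomputable def opNorm {m : Type*} [Fintype m] [DecidableEq m] (M : Matrix m m ℂ) : ℝ :=
  ‖(Matrix.toEuclideanCLM (𝕜 := ℂ) M : EuclideanSpace ℂ m →L[ℂ] EuclideanSpace ℂ m)‖

/-- Frobenius (Hilbert-Schmidt) norm of a matrix. -/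
noncomputable def frob {m p : Type*} [Fintype m] [Fintype p] (M : Matrix m p ℂ) : ℝ :=
  Real.sqrt (Matrix.trace (Mᴴ * M)).re

/-- Partial trace over the second tensor factor. -/
def ptrace {k n : ℕ} (M : Matrix (Fin k × Fin n) (Fin k × Fin n) ℂ) :
    Matrix (Fin k) (Fin k) ℂ :=
  Matrix.of fun i j => ∑ a : Fin n, M (i, a) (j, a)

/-- The canonical injection ℂ^d → ℂ^{kn}, as a kn × d matrix with ones on the
diagonal and zeros elsewhere. -/
def inj (k n d : ℕ) : Matrix (Fin k × Fin n) (Fin d) ℂ :=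
  Matrix.of fun p l => if (finProdFinEquiv p : ℕ) = (l : ℕ) then 1 else 0

/-- The quantum channel X ↦ (id_k ⊗ tr_n)(U P X P* U*). -/
def channel (k n d : ℕ) (U : Matrix (Fin k × Fin n) (Fin k × Fin n) ℂ)
    (X : Matrix (Fin d) (Fin d) ℂ) : Matrix (Fin k) (Fin k) ℂ :=
  ptrace (U * (inj k n d * X * (inj k n d)ᴴ) * Uᴴ)

/-- The operator norm ‖P* U* (A ⊗ I_n) U P‖. -/
noncomputable def outNorm (k n d : ℕ) (U : Matrix (Fin k × Fin n) (Fin k × Fin n) ℂ)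
    (A : Matrix (Fin k) (Fin k) ℂ) : ℝ :=
  opNorm ((inj k n d)ᴴ * Uᴴ * (A ⊗ₖ (1 : Matrix (Fin n) (Fin n) ℂ)) * U * inj k n d)

instance matrixMeasurableSpace {m p : Type*} : MeasurableSpace (Matrix m p ℂ) :=
  show MeasurableSpace (m → p → ℂ) from inferInstance

/-- `μ` is the Haar probability measure on the unitary group, viewed as a measure on
matrix space: a probability measure giving full mass to the unitary group and invariant
under left translation by unitaries. -/
def IsHaarUnitary {m : Type*} [Fintype m] [DecidableEq m]
    (μ : Measure (Matrix m m ℂ)) : Prop :=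
  IsProbabilityMeasure μ ∧ μ (Matrix.unitaryGroup m ℂ : Set (Matrix m m ℂ)) = 1 ∧
    ∀ V ∈ Matrix.unitaryGroup m ℂ, Measure.map (fun W => V * W) μ = μ

/-- Von Neumann entropy of a (Hermitian) matrix, via its eigenvalues,
with the convention 0 ln 0 = 0. -/
noncomputable def vnEntropy {m : Type*} [Fintype m] [DecidableEq m]
    (X : Matrix m m ℂ) : ℝ :=
  if h : X.IsHermitian then -∑ i, h.eigenvalues i * Real.log (h.eigenvalues i) else 0

end

/-- Support function of a set of matrices: `max_{X ∈ K} tr(XA)`. -/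
noncomputable def suppFn {k : ℕ} (K : Set (Matrix (Fin k) (Fin k) ℂ))
    (A : Matrix (Fin k) (Fin k) ℂ) : ℝ :=
  sSup ((fun X => (Matrix.trace (X * A)).re) '' K)


set_option linter.unusedSectionVars false
set_option maxHeartbeats 1000000

namespace StmtAux

open scoped Kronecker ComplexOrder
open Matrix

section General

variable {m : Type*} [Fintype m] [DecidableEq m]

lemma dotProduct_single_single (M : Matrix m m ℂ) (i : m) :
    star (Pi.single i 1) ⬝ᵥ M *ᵥ (Pi.single i 1) = M i i := by
  simp [dotProduct, mulVec, Pi.single_apply, apply_ite (star : ℂ → ℂ)]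

lemma trace_nonneg' {M : Matrix m m ℂ} (hM : M.PosSemidef) : 0 ≤ M.trace := by
  rw [Matrix.trace]
  refine Finset.sum_nonneg fun i _ => ?_
  have := hM.dotProduct_mulVec_nonneg (Pi.single i 1)
  rwa [dotProduct_single_single] at this

lemma trace_mul_psd_nonneg {A B : Matrix m m ℂ} (hA : A.PosSemidef) (hB : B.PosSemidef) :
    0 ≤ (A * B).trace := by
  obtain ⟨C, rfl⟩ : ∃ C : Matrix m m ℂ, B = Cᴴ * C := by
    open scoped MatrixOrder in
    exact CStarAlgebra.nonneg_iff_eq_star_mul_self.mp hB.nonneg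
  rw [← Matrix.mul_assoc, Matrix.trace_mul_cycle]
  exact trace_nonneg' (hA.mul_mul_conjTranspose_same C)

lemma smul_one_herm (c : ℝ) : ((c : ℂ) • (1 : Matrix m m ℂ)).IsHermitian := by
  unfold Matrix.IsHermitian
  rw [conjTranspose_smul]
  simp

lemma quadform_star_eq {N : Matrix m m ℂ} (hN : N.IsHermitian) (x : m → ℂ) :
    star (star x ⬝ᵥ N *ᵥ x) = star x ⬝ᵥ N *ᵥ x := by
  have h1 : star x ⬝ᵥ N *ᵥ x = star (star (N *ᵥ x) ⬝ᵥ x) := star_dotProduct _ _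
  have h2 : star (star x ⬝ᵥ N *ᵥ x) = star (N *ᵥ x) ⬝ᵥ x := by rw [h1, star_star]
  rw [h2, star_mulVec, ← dotProduct_mulVec, hN.eq]

lemma herm_shift_psd {N : Matrix m m ℂ} (hN : N.IsHermitian) {c : ℝ}
    (h : ∀ x : m → ℂ, ‖star x ⬝ᵥ N *ᵥ x‖ ≤ c * (star x ⬝ᵥ x).re) :
    ((c : ℂ) • 1 - N).PosSemidef ∧ (N + (c : ℂ) • 1).PosSemidef := by
  have hherm1 : ((c : ℂ) • (1 : Matrix m m ℂ) - N).IsHermitian :=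
    (smul_one_herm c).sub hN
  have hherm2 : (N + (c : ℂ) • (1 : Matrix m m ℂ)).IsHermitian :=
    hN.add (smul_one_herm c)
  have him : ∀ x : m → ℂ, (star x ⬝ᵥ N *ᵥ x).im = 0 := by
    intro x
    have := quadform_star_eq hN x
    rw [Complex.star_def, Complex.conj_eq_iff_im] at this
    exact this
  have hre : ∀ x : m → ℂ, |(star x ⬝ᵥ N *ᵥ x).re| ≤ c * (star x ⬝ᵥ x).re := by
    intro x
    refine le_trans ?_ (h x)
    exact Complex.abs_re_le_norm _
  have hxx : ∀ x : m → ℂ, (star x ⬝ᵥ x).im = 0 := by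
    intro x
    have : 0 ≤ star x ⬝ᵥ x := dotProduct_star_self_nonneg x
    rw [Complex.nonneg_iff] at this
    exact this.2.symm
  constructor
  · refine PosSemidef.of_dotProduct_mulVec_nonneg hherm1 fun x => ?_
    rw [Complex.nonneg_iff]
    have hexp : star x ⬝ᵥ ((c : ℂ) • 1 - N) *ᵥ x
        = (c : ℂ) * (star x ⬝ᵥ x) - star x ⬝ᵥ N *ᵥ x := by
      rw [sub_mulVec, dotProduct_sub, smul_mulVec, one_mulVec, dotProduct_smul,
        smul_eq_mul]
    rw [hexp]
    constructor
    · simp only [Complex.sub_re, Complex.mul_re, Complex.ofReal_re, Complex.ofReal_im,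
        zero_mul, sub_zero]
      have h2 := abs_le.mp (hre x)
      linarith [h2.2]
    · simp [Complex.sub_im, Complex.mul_im, hxx x, him x]
  · refine PosSemidef.of_dotProduct_mulVec_nonneg hherm2 fun x => ?_
    rw [Complex.nonneg_iff]
    have hexp : star x ⬝ᵥ (N + (c : ℂ) • 1) *ᵥ x
        = star x ⬝ᵥ N *ᵥ x + (c : ℂ) * (star x ⬝ᵥ x) := by
      rw [add_mulVec, dotProduct_add, smul_mulVec, one_mulVec, dotProduct_smul,
        smul_eq_mul]
    rw [hexp]
    constructor
    · simp only [Complex.add_re, Complex.mul_re, Complex.ofReal_re, Complex.ofReal_im,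
        zero_mul, sub_zero]
      have h2 := abs_le.mp (hre x)
      linarith [h2.1]
    · simp [Complex.add_im, Complex.mul_im, hxx x, him x]

lemma re_conj_mul (z : ℂ) : ((starRingEnd ℂ) z * z).re = ‖z‖ ^ 2 := by
  rw [Complex.mul_re]
  simp [Complex.sq_norm, Complex.normSq_apply]

lemma inner_symm_dot (x y : m → ℂ) :
    (inner ℂ ((WithLp.equiv 2 (m → ℂ)).symm x) ((WithLp.equiv 2 (m → ℂ)).symm y) : ℂ)
      = star x ⬝ᵥ y :=
  by rw [dotProduct_comm]; rfl

lemma norm_symm_sq (x : m → ℂ) :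
    ‖(WithLp.equiv 2 (m → ℂ)).symm x‖ ^ 2 = (star x ⬝ᵥ x).re := by
  rw [← inner_symm_dot x x]
  exact (inner_self_eq_norm_sq (𝕜 := ℂ) _).symm

lemma quadform_le_opNorm (N : Matrix m m ℂ) (x : m → ℂ) :
    ‖star x ⬝ᵥ N *ᵥ x‖ ≤ opNorm N * (star x ⬝ᵥ x).re := by
  set v := (WithLp.equiv 2 (m → ℂ)).symm x with hv
  have h1 : (inner ℂ v ((toEuclideanCLM (𝕜 := ℂ) N) v) : ℂ) = star x ⬝ᵥ N *ᵥ x := by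
    rw [EuclideanSpace.inner_eq_star_dotProduct, dotProduct_comm]
    rfl
  rw [← h1]
  calc ‖(inner ℂ v ((toEuclideanCLM (𝕜 := ℂ) N) v) : ℂ)‖
      ≤ ‖v‖ * ‖(toEuclideanCLM (𝕜 := ℂ) N) v‖ := norm_inner_le_norm _ _
    _ ≤ ‖v‖ * (‖(toEuclideanCLM (𝕜 := ℂ) N : EuclideanSpace ℂ m →L[ℂ] EuclideanSpace ℂ m)‖ * ‖v‖) := by
        apply mul_le_mul_of_nonneg_left (ContinuousLinearMap.le_opNorm _ _) (norm_nonneg _)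
    _ = opNorm N * (star x ⬝ᵥ x).re := by
        rw [← norm_symm_sq x, ← hv, opNorm]; ring

lemma trace_conjT_mul_re (B : Matrix m m ℂ) :
    (Matrix.trace (Bᴴ * B)).re = ∑ i, ∑ j, ‖B i j‖ ^ 2 := by
  rw [Matrix.trace]
  simp only [Matrix.diag_apply, Matrix.mul_apply, Matrix.conjTranspose_apply, Complex.re_sum]
  rw [Finset.sum_comm]
  exact Finset.sum_congr rfl fun i _ => Finset.sum_congr rfl fun j _ => re_conj_mul _

lemma frob_sq (B : Matrix m m ℂ) : frob B ^ 2 = ∑ i, ∑ j, ‖B i j‖ ^ 2 := by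
  rw [frob, Real.sq_sqrt, trace_conjT_mul_re]
  rw [trace_conjT_mul_re]
  positivity

lemma frob_nonneg {p : Type*} [Fintype p] (B : Matrix m p ℂ) : 0 ≤ frob B := Real.sqrt_nonneg _

lemma mulVec_norm_le (B : Matrix m m ℂ) (x : m → ℂ) :
    ‖(WithLp.equiv 2 (m → ℂ)).symm (B *ᵥ x)‖ ≤ frob B * ‖(WithLp.equiv 2 (m → ℂ)).symm x‖ := by
  set v := (WithLp.equiv 2 (m → ℂ)).symm x with hv
  have key : ∀ i, ‖(B *ᵥ x) i‖ ^ 2 ≤ (∑ j, ‖B i j‖ ^ 2) * ‖v‖ ^ 2 := by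
    intro i
    have h1 : (inner ℂ ((WithLp.equiv 2 (m → ℂ)).symm (star (B i))) v : ℂ) = (B *ᵥ x) i := by
      rw [hv, inner_symm_dot, star_star]
      rfl
    have h2 : ‖(B *ᵥ x) i‖ ≤ ‖(WithLp.equiv 2 (m → ℂ)).symm (star (B i))‖ * ‖v‖ := by
      rw [← h1]; exact norm_inner_le_norm _ _
    have h3 : ‖(WithLp.equiv 2 (m → ℂ)).symm (star (B i))‖ ^ 2 = ∑ j, ‖B i j‖ ^ 2 := by
      rw [norm_symm_sq, star_star]
      simp only [dotProduct, Pi.star_apply]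
      rw [Complex.re_sum]
      refine Finset.sum_congr rfl fun j _ => ?_
      rw [show star (B i j) = (starRingEnd ℂ) (B i j) from rfl, mul_comm, re_conj_mul]
    calc ‖(B *ᵥ x) i‖ ^ 2 ≤ (‖(WithLp.equiv 2 (m → ℂ)).symm (star (B i))‖ * ‖v‖) ^ 2 := by
          apply pow_le_pow_left₀ (norm_nonneg _) h2
      _ = (∑ j, ‖B i j‖ ^ 2) * ‖v‖ ^ 2 := by rw [mul_pow, h3]
  have hn : ‖(WithLp.equiv 2 (m → ℂ)).symm (B *ᵥ x)‖ ^ 2 ≤ (frob B * ‖v‖) ^ 2 := by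
    have hh : ‖(WithLp.equiv 2 (m → ℂ)).symm (B *ᵥ x)‖ ^ 2 = ∑ i, ‖(B *ᵥ x) i‖ ^ 2 := by
      rw [EuclideanSpace.norm_eq, Real.sq_sqrt (Finset.sum_nonneg fun i _ => sq_nonneg _)]
      rfl
    rw [hh, mul_pow, frob_sq, Finset.sum_mul]
    exact Finset.sum_le_sum fun i _ => key i
  have h4 := Real.sqrt_le_sqrt hn
  rwa [Real.sqrt_sq (norm_nonneg _),
    Real.sqrt_sq (mul_nonneg (frob_nonneg B) (norm_nonneg _))] at h4

lemma quadform_le_frob (B : Matrix m m ℂ) (x : m → ℂ) :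
    ‖star x ⬝ᵥ B *ᵥ x‖ ≤ frob B * (star x ⬝ᵥ x).re := by
  set v := (WithLp.equiv 2 (m → ℂ)).symm x with hv
  have h1 : (inner ℂ v ((WithLp.equiv 2 (m → ℂ)).symm (B *ᵥ x)) : ℂ) = star x ⬝ᵥ B *ᵥ x := by
    rw [hv, inner_symm_dot]
  rw [← h1]
  calc ‖(inner ℂ v ((WithLp.equiv 2 (m → ℂ)).symm (B *ᵥ x)) : ℂ)‖
      ≤ ‖v‖ * ‖(WithLp.equiv 2 (m → ℂ)).symm (B *ᵥ x)‖ := norm_inner_le_norm _ _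
    _ ≤ ‖v‖ * (frob B * ‖v‖) := by
        exact mul_le_mul_of_nonneg_left (mulVec_norm_le B x) (norm_nonneg _)
    _ = frob B * (star x ⬝ᵥ x).re := by rw [← norm_symm_sq x, ← hv]; ring

lemma trace_mul_le_opNorm {X N : Matrix m m ℂ} (hX : X.PosSemidef) (hXtr : X.trace = 1)
    (hN : N.PosSemidef) : ((X * N).trace).re ≤ opNorm N := by
  have hshift := (herm_shift_psd hN.1 (quadform_le_opNorm N)).1
  have h0 : 0 ≤ (X * (((opNorm N : ℂ)) • 1 - N)).trace := trace_mul_psd_nonneg hX hshift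
  rw [Matrix.mul_sub, Matrix.trace_sub] at h0
  have h1 : (X * ((opNorm N : ℂ) • 1)).trace = (opNorm N : ℂ) := by
    rw [Matrix.mul_smul, Matrix.trace_smul, Matrix.mul_one, hXtr, smul_eq_mul, mul_one]
  rw [h1] at h0
  rw [Complex.nonneg_iff] at h0
  have := h0.1
  simp only [Complex.sub_re, Complex.ofReal_re] at this
  linarith

end General

section PtraceInj

variable {k n d : ℕ}

lemma trace_ptrace (M : Matrix (Fin k × Fin n) (Fin k × Fin n) ℂ) :
    (ptrace M).trace = M.trace := by
  rw [Matrix.trace, Matrix.trace, Fintype.sum_prod_type]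
  rfl

lemma ptrace_posSemidef {M : Matrix (Fin k × Fin n) (Fin k × Fin n) ℂ}
    (hM : M.PosSemidef) : (ptrace M).PosSemidef := by
  refine PosSemidef.of_dotProduct_mulVec_nonneg ?_ ?_
  · show (ptrace M)ᴴ = ptrace M
    ext i j
    simp only [Matrix.conjTranspose_apply, ptrace, Matrix.of_apply, star_sum]
    refine Finset.sum_congr rfl fun a _ => ?_
    have := congrFun (congrFun hM.1 (i, a)) (j, a)
    rw [Matrix.conjTranspose_apply] at this
    exact this
  · intro y
    have term : ∀ a : Fin n,
        star (fun p : Fin k × Fin n => if p.2 = a then y p.1 else 0)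
          ⬝ᵥ M *ᵥ (fun p : Fin k × Fin n => if p.2 = a then y p.1 else 0)
        = ∑ i, ∑ j, star (y i) * (M (i, a) (j, a) * y j) := by
      intro a
      simp only [dotProduct, mulVec, Fintype.sum_prod_type, Pi.star_apply,
        apply_ite (star : ℂ → ℂ), star_zero, mul_ite, mul_zero, ite_mul, zero_mul,
        Finset.sum_ite_eq', Finset.mem_univ, if_true, dotProduct]
      exact Finset.sum_congr rfl fun i _ => Finset.mul_sum _ _ _
    have lhs : star y ⬝ᵥ (ptrace M) *ᵥ y
        = ∑ i, ∑ j, ∑ a : Fin n, star (y i) * (M (i, a) (j, a) * y j) := by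
      simp only [dotProduct, mulVec, ptrace, Matrix.of_apply, Pi.star_apply,
        Finset.sum_mul, Finset.mul_sum]
    rw [lhs]
    have swap : ∑ i, ∑ j, ∑ a : Fin n, star (y i) * (M (i, a) (j, a) * y j)
        = ∑ a : Fin n, ∑ i, ∑ j, star (y i) * (M (i, a) (j, a) * y j) :=
      calc ∑ i, ∑ j, ∑ a : Fin n, star (y i) * (M (i, a) (j, a) * y j)
          = ∑ i, ∑ a : Fin n, ∑ j, star (y i) * (M (i, a) (j, a) * y j) :=
            Finset.sum_congr rfl fun i _ => Finset.sum_comm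
        _ = ∑ a : Fin n, ∑ i, ∑ j, star (y i) * (M (i, a) (j, a) * y j) :=
            Finset.sum_comm
    rw [swap]
    refine Finset.sum_nonneg fun a _ => ?_
    rw [← term a]
    exact hM.dotProduct_mulVec_nonneg _

lemma trace_ptrace_mul (M : Matrix (Fin k × Fin n) (Fin k × Fin n) ℂ)
    (A : Matrix (Fin k) (Fin k) ℂ) :
    ((ptrace M) * A).trace = (M * (A ⊗ₖ (1 : Matrix (Fin n) (Fin n) ℂ))).trace := by
  have lhs : ((ptrace M) * A).trace = ∑ i, ∑ j, ∑ a : Fin n, M (i, a) (j, a) * A j i := by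
    rw [Matrix.trace]
    simp only [Matrix.diag_apply, Matrix.mul_apply, ptrace, Matrix.of_apply, Finset.sum_mul]
  have rhs : (M * (A ⊗ₖ (1 : Matrix (Fin n) (Fin n) ℂ))).trace
      = ∑ i, ∑ a : Fin n, ∑ j, M (i, a) (j, a) * A j i := by
    rw [Matrix.trace, Fintype.sum_prod_type]
    simp only [Matrix.diag_apply, Matrix.mul_apply, Matrix.kroneckerMap_apply,
      Matrix.one_apply, Fintype.sum_prod_type, mul_ite, mul_one, mul_zero,
      Finset.sum_ite_eq', Finset.mem_univ, if_true]
  rw [lhs, rhs]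
  exact Finset.sum_congr rfl fun i _ => Finset.sum_comm

lemma injH_mul_inj (hdkn : d ≤ k * n) : (inj k n d)ᴴ * inj k n d = 1 := by
  ext l l'
  simp only [Matrix.mul_apply, Matrix.conjTranspose_apply, inj, Matrix.of_apply,
    apply_ite (star : ℂ → ℂ), star_one, star_zero, ite_mul, one_mul, zero_mul, mul_ite,
    mul_one, mul_zero]
  rw [← Equiv.sum_comp (finProdFinEquiv (m := k) (n := n)).symm]
  simp only [Equiv.apply_symm_apply]
  have key : ∀ q : Fin (k * n),
      (if (q : ℕ) = (l' : ℕ) then (if (q : ℕ) = (l : ℕ) then (1:ℂ) else 0) else 0)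
      = if q = Fin.mk (l' : ℕ) (lt_of_lt_of_le l'.isLt hdkn)
          then (if (l' : ℕ) = (l : ℕ) then (1:ℂ) else 0) else 0 := by
    intro q
    by_cases h : (q : ℕ) = (l' : ℕ)
    · have hq : q = Fin.mk (l' : ℕ) (lt_of_lt_of_le l'.isLt hdkn) := Fin.ext h
      simp [hq, h]
    · have hq : q ≠ Fin.mk (l' : ℕ) (lt_of_lt_of_le l'.isLt hdkn) := by
        intro hq; exact h (by rw [hq])
      simp [h, hq]
  rw [Finset.sum_congr rfl fun q _ => key q, Finset.sum_ite_eq', Matrix.one_apply]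
  simp only [Finset.mem_univ, if_true]
  by_cases h : l = l'
  · simp [h]
  · have h2 : (l' : ℕ) ≠ (l : ℕ) := fun hc => h (Fin.ext hc.symm)
    simp [h, h2]

lemma kron_one_posSemidef {A : Matrix (Fin k) (Fin k) ℂ} (hA : A.PosSemidef) :
    (A ⊗ₖ (1 : Matrix (Fin n) (Fin n) ℂ)).PosSemidef := by
  refine PosSemidef.of_dotProduct_mulVec_nonneg ?_ ?_
  · show (A ⊗ₖ (1 : Matrix (Fin n) (Fin n) ℂ))ᴴ = _
    ext p q
    simp only [Matrix.conjTranspose_apply, Matrix.kroneckerMap_apply, Matrix.one_apply,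
      star_mul', apply_ite (star : ℂ → ℂ), star_one, star_zero]
    have := congrFun (congrFun hA.1 p.1) q.1
    rw [Matrix.conjTranspose_apply] at this
    rw [this]
    by_cases h : q.2 = p.2
    · simp [h, eq_comm, mul_comm]
    · have h' : ¬ p.2 = q.2 := fun hc => h hc.symm
      simp [h, h']
  · intro x
    have key : star x ⬝ᵥ (A ⊗ₖ (1 : Matrix (Fin n) (Fin n) ℂ)) *ᵥ x
        = ∑ a : Fin n, star (fun i => x (i, a)) ⬝ᵥ A *ᵥ (fun i => x (i, a)) := by
      simp only [dotProduct, mulVec, Fintype.sum_prod_type, Pi.star_apply,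
        Matrix.kroneckerMap_apply, Matrix.one_apply, mul_ite, mul_one, mul_zero, ite_mul,
        zero_mul, Finset.sum_ite_eq', Finset.sum_ite_eq, Finset.mem_univ, if_true]
      rw [Finset.sum_comm]
    rw [key]
    exact Finset.sum_nonneg fun a _ => hA.dotProduct_mulVec_nonneg _

end PtraceInj

noncomputable def mat2E {k : ℕ} :
    Matrix (Fin k) (Fin k) ℂ →ₗ[ℝ] EuclideanSpace ℂ (Fin k × Fin k) where
  toFun M := (WithLp.equiv 2 (Fin k × Fin k → ℂ)).symm (fun p => M p.1 p.2)
  map_add' M N := rfl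
  map_smul' r M := rfl

lemma mat2E_inner {k : ℕ} (C D : Matrix (Fin k) (Fin k) ℂ) :
    (inner ℂ (mat2E C) (mat2E D) : ℂ) = Matrix.trace (Cᴴ * D) := by
  have h : (inner ℂ (mat2E C) (mat2E D) : ℂ)
      = star (fun p : Fin k × Fin k => C p.1 p.2) ⬝ᵥ (fun p : Fin k × Fin k => D p.1 p.2) :=
    inner_symm_dot _ _
  rw [h, Matrix.trace]
  simp only [dotProduct, Matrix.diag_apply, Matrix.mul_apply, Matrix.conjTranspose_apply,
    Pi.star_apply, Fintype.sum_prod_type]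
  rw [Finset.sum_comm]

lemma mat2E_norm {k : ℕ} (C : Matrix (Fin k) (Fin k) ℂ) : ‖mat2E C‖ = frob C := by
  rw [frob, norm_eq_sqrt_re_inner (𝕜 := ℂ), mat2E_inner]
  rfl

lemma mat2E_continuous {k : ℕ} : Continuous (mat2E (k := k)) :=
  LinearMap.continuous_of_finiteDimensional _

end StmtAux

/-- if `‖P* U* (A ⊗ I_n) U P‖ ≤ max_{X ∈ K} tr(XA) + ε/k` for every density
matrix `A`, then the output set of the channel is contained in the `ε`-fattening of `K`
(with respect to the Frobenius norm) inside the density matrices. -/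
theorem stmt3 (d k n : ℕ) (hd : 0 < d) (hk : 0 < k) (hn : 0 < n) (hdkn : d ≤ k * n)
    (U : Matrix (Fin k × Fin n) (Fin k × Fin n) ℂ)
    (hU : U ∈ Matrix.unitaryGroup (Fin k × Fin n) ℂ)
    (K : Set (Matrix (Fin k) (Fin k) ℂ)) (hKne : K.Nonempty) (hKconv : Convex ℝ K)
    (hKcomp : IsCompact K) (hKD : K ⊆ {X | IsDensity X})
    (ε : ℝ) (hε : 0 < ε)
    (hyp : ∀ A : Matrix (Fin k) (Fin k) ℂ, IsDensity A →
      outNorm k n d U A ≤ suppFn K A + ε / k) :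
    channel k n d U '' {X | IsDensity X} ⊆
      {Y : Matrix (Fin k) (Fin k) ℂ | IsDensity Y ∧ ∃ X ∈ K, frob (X - Y) ≤ ε} := by
  classical
  rintro Y ⟨X, hX, rfl⟩
  simp only [Set.mem_setOf_eq] at hX
  set P := inj k n d with hP
  have hU1 : Uᴴ * U = 1 := hU.1
  have hU2 : U * Uᴴ = 1 := hU.2
  set Y := channel k n d U X with hYdef
  -- Y is a density matrix
  have hWps : (P * X * Pᴴ).PosSemidef := hX.1.mul_mul_conjTranspose_same P
  have hMps : (U * (P * X * Pᴴ) * Uᴴ).PosSemidef := hWps.mul_mul_conjTranspose_same U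
  have hYps : Y.PosSemidef := StmtAux.ptrace_posSemidef hMps
  have hYtr : Y.trace = 1 := by
    rw [hYdef]
    show (ptrace (U * (P * X * Pᴴ) * Uᴴ)).trace = 1
    rw [StmtAux.trace_ptrace]
    rw [Matrix.trace_mul_cycle, ← Matrix.mul_assoc, hU1, Matrix.one_mul,
      Matrix.trace_mul_cycle, hP, StmtAux.injH_mul_inj hdkn,
      Matrix.one_mul, hX.2]
  have hYdens : IsDensity Y := ⟨hYps, hYtr⟩
  -- the key trace identity
  have keytrace : ∀ A : Matrix (Fin k) (Fin k) ℂ,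
      (Y * A).trace = (X * (Pᴴ * Uᴴ * (A ⊗ₖ (1 : Matrix (Fin n) (Fin n) ℂ)) * U * P)).trace := by
    intro A
    rw [hYdef]
    show ((ptrace (U * (P * X * Pᴴ) * Uᴴ)) * A).trace = _
    rw [StmtAux.trace_ptrace_mul]
    rw [show U * (P * X * Pᴴ) * Uᴴ * (A ⊗ₖ (1 : Matrix (Fin n) (Fin n) ℂ))
        = (U * (P * X * Pᴴ)) * (Uᴴ * (A ⊗ₖ (1 : Matrix (Fin n) (Fin n) ℂ))) by
      simp only [Matrix.mul_assoc]]
    rw [Matrix.trace_mul_comm]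
    rw [show Uᴴ * (A ⊗ₖ (1 : Matrix (Fin n) (Fin n) ℂ)) * (U * (P * X * Pᴴ))
        = (Uᴴ * (A ⊗ₖ (1 : Matrix (Fin n) (Fin n) ℂ)) * U * P * X) * Pᴴ by
      simp only [Matrix.mul_assoc]]
    rw [Matrix.trace_mul_comm]
    rw [show Pᴴ * (Uᴴ * (A ⊗ₖ (1 : Matrix (Fin n) (Fin n) ℂ)) * U * P * X)
        = (Pᴴ * (Uᴴ * (A ⊗ₖ (1 : Matrix (Fin n) (Fin n) ℂ)) * U * P)) * X by
      simp only [Matrix.mul_assoc]]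
    rw [Matrix.trace_mul_comm]
    simp only [Matrix.mul_assoc]
  -- first inequality : tr(YA).re ≤ outNorm A for A density
  have hle1 : ∀ A : Matrix (Fin k) (Fin k) ℂ, IsDensity A →
      ((Y * A).trace).re ≤ outNorm k n d U A := by
    intro A hA
    rw [keytrace A]
    have hNps : (Pᴴ * Uᴴ * (A ⊗ₖ (1 : Matrix (Fin n) (Fin n) ℂ)) * U * P).PosSemidef := by
      have := (StmtAux.kron_one_posSemidef (n := n) hA.1).conjTranspose_mul_mul_same (U * P)
      rw [Matrix.conjTranspose_mul] at this
      simpa only [Matrix.mul_assoc] using this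
    have := StmtAux.trace_mul_le_opNorm hX.1 hX.2 hNps
    exact this
  -- the Hilbert space set-up
  letI : InnerProductSpace ℝ (EuclideanSpace ℂ (Fin k × Fin k)) :=
    InnerProductSpace.rclikeToReal ℂ _
  have hrein : ∀ a b : EuclideanSpace ℂ (Fin k × Fin k),
      (inner ℝ a b : ℝ) = (inner ℂ a b : ℂ).re := fun a b => rfl
  set K' : Set (EuclideanSpace ℂ (Fin k × Fin k)) := StmtAux.mat2E '' K with hK'
  have hK'ne : K'.Nonempty := hKne.image _
  have hK'conv : Convex ℝ K' := hKconv.linear_image StmtAux.mat2E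
  have hK'comp : IsCompact K' := hKcomp.image StmtAux.mat2E_continuous
  have hK'compl : IsComplete K' := hK'comp.isComplete
  set y : EuclideanSpace ℂ (Fin k × Fin k) := StmtAux.mat2E Y with hy
  obtain ⟨v, hvK', hvmin⟩ := exists_norm_eq_iInf_of_complete_convex hK'ne hK'compl hK'conv y
  have hproj : ∀ w ∈ K', (inner ℝ (y - v) (w - v) : ℝ) ≤ 0 :=
    (norm_eq_iInf_iff_real_inner_le_zero hK'conv hvK').mp hvmin
  obtain ⟨X₀, hX₀K, hX₀v⟩ := hvK'
  have hX₀dens := hKD hX₀K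
  simp only [Set.mem_setOf_eq] at hX₀dens
  refine ⟨hYdens, X₀, hX₀K, ?_⟩
  -- it suffices to bound δ = ‖y - v‖
  set δ : ℝ := ‖y - v‖ with hδdef
  have hfr : frob (X₀ - Y) = δ := by
    rw [← StmtAux.mat2E_norm, map_sub, hX₀v, ← hy, ← norm_neg, neg_sub]
  rw [hfr]
  have hδnn : 0 ≤ δ := norm_nonneg _
  rcases eq_or_lt_of_le hδnn with hδ0 | hδpos
  · linarith
  -- main case : δ > 0
  set B : Matrix (Fin k) (Fin k) ℂ := Y - X₀ with hB
  have hBH : B.IsHermitian := hYps.1.sub hX₀dens.1.1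
  have hfrobB : frob B = δ := by
    rw [← StmtAux.mat2E_norm, map_sub, hX₀v, ← hy]
  have hBtr : B.trace = 0 := by
    rw [hB, Matrix.trace_sub, hYtr, hX₀dens.2, sub_self]
  have hBbound : ∀ x : Fin k → ℂ, ‖star x ⬝ᵥ B *ᵥ x‖ ≤ δ * (star x ⬝ᵥ x).re := by
    intro x
    have := StmtAux.quadform_le_frob B x
    rwa [hfrobB] at this
  have hBpsd : (B + (δ : ℂ) • 1).PosSemidef := (StmtAux.herm_shift_psd hBH hBbound).2
  set c : ℝ := ((k : ℝ) * δ)⁻¹ with hc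
  have hcpos : 0 < c := by
    rw [hc]
    apply inv_pos.mpr
    exact mul_pos (by exact_mod_cast hk) hδpos
  set A : Matrix (Fin k) (Fin k) ℂ := (c : ℂ) • (B + (δ : ℂ) • 1) with hA
  -- A is a density matrix
  have hAps : A.PosSemidef := by
    refine PosSemidef.of_dotProduct_mulVec_nonneg ?_ ?_
    · show Aᴴ = A
      rw [hA, Matrix.conjTranspose_smul, hBpsd.1.eq]
      congr 1
      simp [Complex.star_def, Complex.conj_ofReal]
    · intro x
      have hq : star x ⬝ᵥ A *ᵥ x = (c : ℂ) * (star x ⬝ᵥ (B + (δ : ℂ) • 1) *ᵥ x) := by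
        rw [hA, smul_mulVec, dotProduct_smul, smul_eq_mul]
      rw [hq]
      have h0 := hBpsd.dotProduct_mulVec_nonneg x
      rw [Complex.nonneg_iff] at h0 ⊢
      constructor
      · simp only [Complex.mul_re, Complex.ofReal_re, Complex.ofReal_im, zero_mul, sub_zero]
        exact mul_nonneg hcpos.le h0.1
      · simp only [Complex.mul_im, Complex.ofReal_re, Complex.ofReal_im, zero_mul, add_zero]
        rw [← h0.2]
        ring
  have hδne : (δ : ℂ) ≠ 0 := by
    exact_mod_cast (Complex.ofReal_ne_zero).mpr hδpos.ne'
  have hkne : ((k : ℕ) : ℂ) ≠ 0 := by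
    exact_mod_cast Nat.cast_ne_zero.mpr hk.ne'
  have hAtr : A.trace = 1 := by
    rw [hA, Matrix.trace_smul, Matrix.trace_add, hBtr, Matrix.trace_smul, Matrix.trace_one]
    simp only [zero_add, smul_eq_mul, hc]
    rw [Fintype.card_fin]
    push_cast
    field_simp
  have hAdens : IsDensity A := ⟨hAps, hAtr⟩
  -- lower bound : tr(X'A).re + δ/k ≤ tr(YA).re for X' ∈ K
  have hlow : ∀ X' ∈ K, ((X' * A).trace).re + δ / k ≤ ((Y * A).trace).re := by
    intro X' hX'K
    have hX'dens := hKD hX'K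
    simp only [Set.mem_setOf_eq] at hX'dens
    have hdiff : (Y * A).trace - (X' * A).trace = ((Y - X') * A).trace := by
      rw [Matrix.sub_mul, Matrix.trace_sub]
    have hstep1 : ((Y - X') * A).trace = (c : ℂ) * ((Y - X') * (B + (δ : ℂ) • 1)).trace := by
      rw [hA, Matrix.mul_smul, Matrix.trace_smul, smul_eq_mul]
    have hstep2 : ((Y - X') * (B + (δ : ℂ) • 1)).trace = ((Y - X') * B).trace := by
      rw [Matrix.mul_add, Matrix.trace_add, Matrix.mul_smul, Matrix.trace_smul,
        Matrix.mul_one, Matrix.trace_sub, hYtr, hX'dens.2, sub_self, smul_zero, add_zero]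
    have hherm : (Y - X')ᴴ = Y - X' := (hYps.1.sub hX'dens.1.1).eq
    have hstep3 : ((Y - X') * B).trace = (inner ℂ (StmtAux.mat2E (Y - X')) (StmtAux.mat2E B) : ℂ) := by
      rw [StmtAux.mat2E_inner, hherm]
    have hinner : ((inner ℂ (StmtAux.mat2E (Y - X')) (StmtAux.mat2E B) : ℂ)).re ≥ δ ^ 2 := by
      have hmB : StmtAux.mat2E B = y - v := by
        rw [hB, map_sub, hX₀v, ← hy]
      have hmYX : StmtAux.mat2E (Y - X') = (y - v) + (v - StmtAux.mat2E X') := by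
        rw [map_sub, ← hy]
        abel
      rw [← hrein]
      rw [hmB, hmYX]
      rw [inner_add_left]
      have h1 : (inner ℝ (y - v) (y - v) : ℝ) = δ ^ 2 := by
        rw [real_inner_self_eq_norm_sq]
      have h2 : (inner ℝ (v - StmtAux.mat2E X') (y - v) : ℝ) ≥ 0 := by
        have hx'K' : StmtAux.mat2E X' ∈ K' := Set.mem_image_of_mem _ hX'K
        have := hproj _ hx'K'
        have hsymm : (inner ℝ (v - StmtAux.mat2E X') (y - v) : ℝ)
            = - (inner ℝ (y - v) (StmtAux.mat2E X' - v) : ℝ) := by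
          rw [real_inner_comm, ← neg_sub (StmtAux.mat2E X') v, inner_neg_right]
        rw [hsymm]
        linarith
      linarith
    have hre : (((Y - X') * A).trace).re ≥ δ / k := by
      rw [hstep1, hstep2, hstep3]
      have : ((c : ℂ) * (inner ℂ (StmtAux.mat2E (Y - X')) (StmtAux.mat2E B) : ℂ)).re
          = c * ((inner ℂ (StmtAux.mat2E (Y - X')) (StmtAux.mat2E B) : ℂ)).re := by
        simp [Complex.mul_re, Complex.ofReal_re, Complex.ofReal_im]
      rw [this]
      have hcval : c * δ ^ 2 = δ / k := by
        rw [hc]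
        field_simp
      calc δ / k = c * δ ^ 2 := hcval.symm
        _ ≤ c * ((inner ℂ (StmtAux.mat2E (Y - X')) (StmtAux.mat2E B) : ℂ)).re :=
            mul_le_mul_of_nonneg_left hinner hcpos.le
    have : ((Y * A).trace).re - ((X' * A).trace).re ≥ δ / k := by
      have := congrArg Complex.re hdiff
      simp only [Complex.sub_re] at this
      rw [this]
      exact hre
    linarith
  -- conclude
  have hsupp : suppFn K A ≤ ((Y * A).trace).re - δ / k := by
    apply csSup_le (hKne.image _)
    rintro r ⟨X', hX'K, rfl⟩
    have := hlow X' hX'K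
    linarith
  have h1 := hle1 A hAdens
  have h2 := hyp A hAdens
  have hkpos : (0:ℝ) < k := by exact_mod_cast hk
  have : δ / k ≤ ε / k := by linarith
  have := (div_le_div_iff_of_pos_right hkpos).mp this
  linarith
end

section
/- There exists a function g : ℝ → ℝ of class C⁶ such that g(x) = 0 for all x ≤ 0, g(x) = 1 for all x ≥ 1, g takes values in [0,1] everywhere, and for every integer 0 ≤ j ≤ 6 the supremum norm of the j-th derivative satisfies ‖g⁽ʲ⁾‖_∞ = 2^{j(j+1)/2}. -/
open intervalIntegral Set

noncomputable def sstep (g : ℝ → ℝ) : ℝ → ℝ :=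
  fun x => ∫ t in (0:ℝ)..x, 2 * (g (2 * t) - g (2 * t - 1))

lemma sstep_integrand_cont {g : ℝ → ℝ} (hg : Continuous g) :
    Continuous fun t : ℝ => 2 * (g (2 * t) - g (2 * t - 1)) := by fun_prop

lemma sstep_deriv {g : ℝ → ℝ} (hg : Continuous g) :
    deriv (sstep g) = fun x => 2 * (g (2 * x) - g (2 * x - 1)) := by
  funext x
  exact Continuous.deriv_integral _ (sstep_integrand_cont hg) 0 x

lemma sstep_contDiff {k : ℕ} {g : ℝ → ℝ} (hg : ContDiff ℝ k g) :
    ContDiff ℝ (k + 1 : ℕ) (sstep g) := by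
  have : ((k + 1 : ℕ) : WithTop ℕ∞) = (k : WithTop ℕ∞) + 1 := by push_cast; ring
  rw [this, contDiff_succ_iff_deriv]
  refine ⟨fun x => ?_, by simp, ?_⟩
  · exact ((sstep_integrand_cont hg.continuous).integral_hasStrictDerivAt 0 x).hasDerivAt.differentiableAt
  · rw [sstep_deriv hg.continuous]
    fun_prop

lemma itd_cmul {j : ℕ} {f : ℝ → ℝ} (hf : ContDiff ℝ j f) (c : ℝ) (x : ℝ) :
    iteratedDeriv j (fun y => c * f y) x = c * iteratedDeriv j f x := by
  simp only [← iteratedDerivWithin_univ]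
  exact iteratedDerivWithin_const_mul (Set.mem_univ x) uniqueDiffOn_univ c hf.contDiffWithinAt

lemma itd_sub {j : ℕ} {f h : ℝ → ℝ} (hf : ContDiff ℝ j f) (hh : ContDiff ℝ j h) (x : ℝ) :
    iteratedDeriv j (fun y => f y - h y) x = iteratedDeriv j f x - iteratedDeriv j h x := by
  simp only [← iteratedDerivWithin_univ]
  exact iteratedDerivWithin_sub (Set.mem_univ x) uniqueDiffOn_univ hf.contDiffWithinAt hh.contDiffWithinAt

lemma itd_two_mul {j : ℕ} {g : ℝ → ℝ} (hg : ContDiff ℝ j g) (x : ℝ) :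
    iteratedDeriv j (fun y => g (2 * y)) x = 2 ^ j * iteratedDeriv j g (2 * x) :=
  congrFun (iteratedDeriv_comp_const_mul hg 2) x

lemma itd_two_mul_sub {j : ℕ} {g : ℝ → ℝ} (hg : ContDiff ℝ j g) (x : ℝ) :
    iteratedDeriv j (fun y => g (2 * y - 1)) x = 2 ^ j * iteratedDeriv j g (2 * x - 1) := by
  have h1 : ContDiff ℝ j (fun z : ℝ => g (z + (-1))) := hg.comp (contDiff_id.add contDiff_const)
  have h2 := iteratedDeriv_comp_const_mul h1 (2 : ℝ)
  have h3 := iteratedDeriv_comp_add_const j g (-1)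
  simp only [sub_eq_add_neg]
  calc iteratedDeriv j (fun y => g (2 * y + (-1))) x
      = 2 ^ j * iteratedDeriv j (fun z : ℝ => g (z + (-1))) (2 * x) := congrFun h2 x
    _ = 2 ^ j * iteratedDeriv j g (2 * x + (-1)) := by rw [h3]

/-- The key recursion for iterated derivatives of `sstep g`. -/
lemma sstep_itd {k j : ℕ} {g : ℝ → ℝ} (hg : ContDiff ℝ k g) (hj : j ≤ k) (x : ℝ) :
    iteratedDeriv (j + 1) (sstep g) x
      = 2 ^ (j + 1) * (iteratedDeriv j g (2 * x) - iteratedDeriv j g (2 * x - 1)) := by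
  have hgj : ContDiff ℝ j g := hg.of_le (by exact_mod_cast hj)
  have hA : ContDiff ℝ j (fun y : ℝ => g (2 * y)) := hgj.comp (by fun_prop)
  have hB : ContDiff ℝ j (fun y : ℝ => g (2 * y - 1)) := hgj.comp (by fun_prop)
  rw [iteratedDeriv_succ', sstep_deriv hg.continuous]
  have : iteratedDeriv j (fun x => 2 * (g (2 * x) - g (2 * x - 1))) x
      = 2 * iteratedDeriv j (fun x => g (2 * x) - g (2 * x - 1)) x :=
    itd_cmul (hA.sub hB) 2 x
  rw [this, itd_sub hA hB, itd_two_mul hgj, itd_two_mul_sub hgj]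
  ring

lemma exp_rec (i : ℕ) : (i + 1) * (i + 1 + 1) / 2 = (i + 1) + i * (i + 1) / 2 := by
  have h : (i + 1) * (i + 2) = i * (i + 1) + (i + 1) * 2 := by ring
  rw [show i + 1 + 1 = i + 2 from rfl, h, Nat.add_mul_div_right _ _ (by norm_num)]
  omega

lemma mem_Icc_of_mono {f : ℝ → ℝ} (h0 : ∀ x : ℝ, x ≤ 0 → f x = 0)
    (h1 : ∀ x : ℝ, 1 ≤ x → f x = 1) (hm : Monotone f) (x : ℝ) : f x ∈ Icc (0:ℝ) 1 := by
  constructor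
  · rcases le_or_gt x 0 with h | h
    · rw [h0 x h]
    · rw [← h0 0 le_rfl]; exact hm h.le
  · rcases le_or_gt 1 x with h | h
    · rw [h1 x h]
    · rw [← h1 1 le_rfl]; exact hm h.le

/-- Inductive invariant. -/
def SInv (k : ℕ) (g : ℝ → ℝ) : Prop :=
  ContDiff ℝ k g ∧ (∀ x : ℝ, x ≤ 0 → g x = 0) ∧ (∀ x : ℝ, 1 ≤ x → g x = 1) ∧ Monotone g ∧
    (∀ j : ℕ, 1 ≤ j → j ≤ k → ∀ x : ℝ, x ≤ 0 ∨ 1 ≤ x → iteratedDeriv j g x = 0) ∧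
    (∀ j : ℕ, j ≤ k → ∀ x : ℝ, |iteratedDeriv j g x| ≤ (2:ℝ) ^ (j * (j + 1) / 2)) ∧
    (∀ j : ℕ, j ≤ k → iteratedDeriv j g ((1:ℝ) / 2 ^ j) = (2:ℝ) ^ (j * (j + 1) / 2))

lemma sstep_zero {g : ℝ → ℝ} (h0 : ∀ x : ℝ, x ≤ 0 → g x = 0) {x : ℝ} (hx : x ≤ 0) :
    sstep g x = 0 := by
  have : sstep g x = ∫ t in (0:ℝ)..x, (0:ℝ) := by
    apply integral_congr
    intro t ht
    rw [Set.uIcc_of_ge hx] at ht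
    have ht0 : t ≤ 0 := ht.2
    simp only []
    rw [h0 (2 * t) (by linarith), h0 (2 * t - 1) (by linarith)]
    ring
  simp [this]

lemma sstep_one {g : ℝ → ℝ} (hg : Continuous g) (h0 : ∀ x : ℝ, x ≤ 0 → g x = 0)
    (h1 : ∀ x : ℝ, 1 ≤ x → g x = 1) {x : ℝ} (hx : 1 ≤ x) :
    sstep g x = 1 := by
  have hic : ∀ a b : ℝ, IntervalIntegrable (fun t => 2 * (g (2 * t) - g (2 * t - 1))) MeasureTheory.volume a b :=
    fun a b => (sstep_integrand_cont hg).intervalIntegrable a b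
  have hsplit : sstep g 1 + (∫ t in (1:ℝ)..x, 2 * (g (2 * t) - g (2 * t - 1))) = sstep g x :=
    integral_add_adjacent_intervals (hic 0 1) (hic 1 x)
  have htail : (∫ t in (1:ℝ)..x, 2 * (g (2 * t) - g (2 * t - 1))) = 0 := by
    have : (∫ t in (1:ℝ)..x, 2 * (g (2 * t) - g (2 * t - 1))) = ∫ t in (1:ℝ)..x, (0:ℝ) := by
      apply integral_congr
      intro t ht
      rw [Set.uIcc_of_le hx] at ht
      have ht1 : 1 ≤ t := ht.1
      simp only []
      rw [h1 (2 * t) (by linarith), h1 (2 * t - 1) (by linarith)]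
      ring
    simp [this]
  have hval : sstep g 1 = 1 := by
    have hgi : ∀ a b : ℝ, IntervalIntegrable g MeasureTheory.volume a b :=
      fun a b => hg.intervalIntegrable a b
    have e1 : sstep g 1 = (∫ t in (0:ℝ)..1, 2 * g (2 * t)) - ∫ t in (0:ℝ)..1, 2 * g (2 * t - 1) := by
      rw [← integral_sub ((by fun_prop : Continuous fun t : ℝ => 2 * g (2 * t)).intervalIntegrable 0 1) ((by fun_prop : Continuous fun t : ℝ => 2 * g (2 * t - 1)).intervalIntegrable 0 1)]
      apply integral_congr; intro t _; ring
    have e2 : (∫ t in (0:ℝ)..1, 2 * g (2 * t)) = ∫ u in (0:ℝ)..2, g u := by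
      have := integral_comp_mul_left (f := fun u => 2 * g u) (a := (0:ℝ)) (b := 1)
        (c := (2:ℝ)) two_ne_zero
      simp only [mul_zero, mul_one] at this
      rw [this, integral_const_mul]
      simp
    have e3 : (∫ t in (0:ℝ)..1, 2 * g (2 * t - 1)) = ∫ u in (-1:ℝ)..1, g u := by
      have := integral_comp_mul_left (f := fun u => 2 * g (u - 1)) (a := (0:ℝ)) (b := 1)
        (c := (2:ℝ)) two_ne_zero
      simp only [mul_zero, mul_one] at this
      rw [this, integral_const_mul]
      have := integral_comp_sub_right (f := g) (a := (0:ℝ)) (b := 2) 1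
      rw [this]
      norm_num
      ring
    have e4 : (∫ u in (0:ℝ)..2, g u) = (∫ u in (0:ℝ)..1, g u) + 1 := by
      rw [← integral_add_adjacent_intervals (hgi 0 1) (hgi 1 2)]
      congr 1
      have : (∫ u in (1:ℝ)..2, g u) = ∫ u in (1:ℝ)..2, (1:ℝ) := by
        apply integral_congr
        intro t ht
        rw [Set.uIcc_of_le (by norm_num : (1:ℝ) ≤ 2)] at ht
        exact h1 t ht.1
      rw [this]; norm_num
    have e5 : (∫ u in (-1:ℝ)..1, g u) = ∫ u in (0:ℝ)..1, g u := by
      rw [← integral_add_adjacent_intervals (hgi (-1) 0) (hgi 0 1)]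
      have : (∫ u in (-1:ℝ)..0, g u) = ∫ u in (-1:ℝ)..0, (0:ℝ) := by
        apply integral_congr
        intro t ht
        rw [Set.uIcc_of_le (by norm_num : (-1:ℝ) ≤ 0)] at ht
        exact h0 t ht.2
      rw [this]; simp
    rw [e1, e2, e3, e4, e5]; ring
  rw [← hsplit, htail, hval]; ring

lemma sstep_mono {g : ℝ → ℝ} (hg : Continuous g) (hm : Monotone g) : Monotone (sstep g) := by
  intro x y hxy
  have hic : ∀ a b : ℝ, IntervalIntegrable (fun t => 2 * (g (2 * t) - g (2 * t - 1))) MeasureTheory.volume a b :=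
    fun a b => (sstep_integrand_cont hg).intervalIntegrable a b
  have hsplit : sstep g x + (∫ t in x..y, 2 * (g (2 * t) - g (2 * t - 1))) = sstep g y :=
    integral_add_adjacent_intervals (hic 0 x) (hic x y)
  have hnn : 0 ≤ ∫ t in x..y, 2 * (g (2 * t) - g (2 * t - 1)) := by
    apply integral_nonneg hxy
    intro u _
    have : g (2 * u - 1) ≤ g (2 * u) := hm (by linarith)
    linarith
  linarith [hsplit]

lemma sinv_step {k : ℕ} {g : ℝ → ℝ} (H : SInv k g) : SInv (k + 1) (sstep g) := by
  obtain ⟨h1, h2, h3, h4, h5, h6, h7⟩ := H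
  have hc := h1.continuous
  have z0 : ∀ x : ℝ, x ≤ 0 → sstep g x = 0 := fun x hx => sstep_zero h2 hx
  have z1 : ∀ x : ℝ, 1 ≤ x → sstep g x = 1 := fun x hx => sstep_one hc h2 h3 hx
  have zm : Monotone (sstep g) := sstep_mono hc h4
  refine ⟨sstep_contDiff h1, z0, z1, zm, ?_, ?_, ?_⟩
  · intro j hj1 hjk x hx
    obtain ⟨i, rfl⟩ : ∃ i, j = i + 1 := ⟨j - 1, by omega⟩
    have hik : i ≤ k := by omega
    rw [sstep_itd h1 hik]
    have e : iteratedDeriv i g (2 * x) - iteratedDeriv i g (2 * x - 1) = 0 := by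
      rcases hx with hx | hx
      · rcases Nat.eq_zero_or_pos i with rfl | hi
        · simp only [iteratedDeriv_zero]
          rw [h2 _ (by linarith), h2 _ (by linarith)]; ring
        · rw [h5 i hi hik _ (Or.inl (by linarith)), h5 i hi hik _ (Or.inl (by linarith))]; ring
      · rcases Nat.eq_zero_or_pos i with rfl | hi
        · simp only [iteratedDeriv_zero]
          rw [h3 _ (by linarith), h3 _ (by linarith)]; ring
        · rw [h5 i hi hik _ (Or.inr (by linarith)), h5 i hi hik _ (Or.inr (by linarith))]; ring
    rw [e]; ring
  · intro j hjk x
    rcases Nat.eq_zero_or_pos j with rfl | hj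
    · simp only [iteratedDeriv_zero]
      have hm := mem_Icc_of_mono z0 z1 zm x
      rw [show (0 * (0 + 1) / 2 : ℕ) = 0 from rfl, pow_zero, abs_le]
      exact ⟨by linarith [hm.1], hm.2⟩
    · obtain ⟨i, rfl⟩ : ∃ i, j = i + 1 := ⟨j - 1, by omega⟩
      have hik : i ≤ k := by omega
      rw [sstep_itd h1 hik]
      have key : |iteratedDeriv i g (2 * x) - iteratedDeriv i g (2 * x - 1)|
          ≤ (2:ℝ) ^ (i * (i + 1) / 2) := by
        rcases Nat.eq_zero_or_pos i with rfl | hi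
        · simp only [iteratedDeriv_zero]
          have ha := mem_Icc_of_mono h2 h3 h4 (2 * x)
          have hb := mem_Icc_of_mono h2 h3 h4 (2 * x - 1)
          have hmono : g (2 * x - 1) ≤ g (2 * x) := h4 (by linarith)
          rw [show (0 * (0 + 1) / 2 : ℕ) = 0 from rfl, pow_zero, abs_le]
          exact ⟨by linarith [ha.1, hb.2], by linarith [ha.2, hb.1]⟩
        · rcases le_or_gt x (1/2) with hx | hx
          · rw [h5 i hi hik (2 * x - 1) (Or.inl (by linarith))]
            simpa using h6 i hik (2 * x)
          · rw [h5 i hi hik (2 * x) (Or.inr (by linarith))]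
            rw [zero_sub, abs_neg]
            exact h6 i hik (2 * x - 1)
      calc |2 ^ (i + 1) * (iteratedDeriv i g (2 * x) - iteratedDeriv i g (2 * x - 1))|
          = 2 ^ (i + 1) * |iteratedDeriv i g (2 * x) - iteratedDeriv i g (2 * x - 1)| := by
            rw [abs_mul, abs_of_nonneg (by positivity)]
        _ ≤ 2 ^ (i + 1) * (2:ℝ) ^ (i * (i + 1) / 2) :=
            mul_le_mul_of_nonneg_left key (by positivity)
        _ = (2:ℝ) ^ ((i + 1) * (i + 1 + 1) / 2) := by rw [exp_rec, pow_add]; ring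
  · intro j hjk
    rcases Nat.eq_zero_or_pos j with rfl | hj
    · simp only [iteratedDeriv_zero]
      rw [show ((1:ℝ) / 2 ^ 0) = 1 by norm_num, z1 1 le_rfl]
      norm_num
    · obtain ⟨i, rfl⟩ : ∃ i, j = i + 1 := ⟨j - 1, by omega⟩
      have hik : i ≤ k := by omega
      rw [sstep_itd h1 hik]
      have hpow : (1:ℝ) ≤ 2 ^ i := one_le_pow₀ (by norm_num)
      have e2x : 2 * ((1:ℝ) / 2 ^ (i + 1)) = 1 / 2 ^ i := by
        rw [pow_succ]
        field_simp
      have hle : 2 * ((1:ℝ) / 2 ^ (i + 1)) - 1 ≤ 0 := by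
        rw [e2x]
        have : (1:ℝ) / 2 ^ i ≤ 1 := by
          rw [div_le_one (by positivity)]; exact hpow
        linarith
      have hb : iteratedDeriv i g (2 * ((1:ℝ) / 2 ^ (i + 1)) - 1) = 0 := by
        rcases Nat.eq_zero_or_pos i with rfl | hi
        · simpa using h2 _ hle
        · exact h5 i hi hik _ (Or.inl hle)
      rw [hb, e2x, h7 i hik, exp_rec, pow_add]
      ring

noncomputable def clamp : ℝ → ℝ := fun x => max 0 (min x 1)

lemma sinv_clamp : SInv 0 clamp := by
  have hb : ∀ x : ℝ, clamp x ∈ Icc (0:ℝ) 1 := by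
    intro x
    exact ⟨le_max_left _ _, max_le zero_le_one (min_le_right _ _)⟩
  refine ⟨contDiff_zero.mpr (by unfold clamp; fun_prop), ?_, ?_, ?_, ?_, ?_, ?_⟩
  · intro x hx
    unfold clamp
    rw [min_eq_left (hx.trans zero_le_one), max_eq_left hx]
  · intro x hx
    unfold clamp
    rw [min_eq_right hx, max_eq_right zero_le_one]
  · exact monotone_const.max (monotone_id.min monotone_const)
  · intro j hj1 hj0 x hx; omega
  · intro j hj x
    obtain rfl : j = 0 := by omega
    simp only [iteratedDeriv_zero]
    rw [show (0 * (0 + 1) / 2 : ℕ) = 0 from rfl, pow_zero, abs_le]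
    exact ⟨by linarith [(hb x).1], (hb x).2⟩
  · intro j hj
    obtain rfl : j = 0 := by omega
    simp only [iteratedDeriv_zero]
    norm_num [clamp]


/-- there is a `C⁶` function `g : ℝ → ℝ` equal to `0` on `(-∞, 0]`, equal to
`1` on `[1, ∞)`, with values in `[0,1]`, and whose `j`-th derivative has supremum norm
exactly `2^{j(j+1)/2}` for every `0 ≤ j ≤ 6`. -/
theorem stmt6 :
    ∃ g : ℝ → ℝ, ContDiff ℝ 6 g ∧
      (∀ x : ℝ, x ≤ 0 → g x = 0) ∧
      (∀ x : ℝ, 1 ≤ x → g x = 1) ∧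
      (∀ x : ℝ, g x ∈ Set.Icc (0 : ℝ) 1) ∧
      ∀ j : ℕ, j ≤ 6 →
        BddAbove (Set.range fun x : ℝ => |iteratedDeriv j g x|) ∧
        (⨆ x : ℝ, |iteratedDeriv j g x|) = 2 ^ (j * (j + 1) / 2) := by
  have H : ∀ n : ℕ, SInv n (sstep^[n] clamp) := by
    intro n
    induction n with
    | zero => exact sinv_clamp
    | succ n ih =>
      rw [Function.iterate_succ_apply']
      exact sinv_step ih
  obtain ⟨h1, h2, h3, h4, h5, h6, h7⟩ := H 6
  refine ⟨sstep^[6] clamp, ?_, h2, h3, fun x => mem_Icc_of_mono h2 h3 h4 x, ?_⟩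
  · exact_mod_cast h1
  · intro j hj
    have hbdd : BddAbove (Set.range fun x : ℝ => |iteratedDeriv j (sstep^[6] clamp) x|) := by
      refine ⟨(2:ℝ) ^ (j * (j + 1) / 2), ?_⟩
      rintro y ⟨x, rfl⟩
      exact h6 j hj x
    refine ⟨hbdd, le_antisymm (ciSup_le fun x => h6 j hj x) ?_⟩
    calc (2:ℝ) ^ (j * (j + 1) / 2)
        = |iteratedDeriv j (sstep^[6] clamp) ((1:ℝ) / 2 ^ j)| := by
          rw [h7 j hj, abs_of_nonneg (by positivity)]
      _ ≤ ⨆ x : ℝ, |iteratedDeriv j (sstep^[6] clamp) x| := le_ciSup hbdd _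
end

section
/- Let N be a positive integer and let f : U(N) → ℝ be a continuous function satisfying f(αX) = f(X) for every X ∈ U(N) and every complex number α with |α| = 1. Then for every X ∈ U(N), ∫ f(YX) dν_{SU(N)}(Y) = ∫ f(U) dν_{U(N)}(U), where ν_{SU(N)} and ν_{U(N)} are the Haar probability measures on SU(N) and U(N) respectively. -/
open MeasureTheory Matrix

noncomputable section

/-- `ν` is the Haar probability measure on the special unitary group `SU(N)`, viewed as a
measure on matrix space: a probability measure giving full mass to `SU(N)` and invariant
under left translation by elements of `SU(N)`. -/
def IsHaarSpecialUnitary {m : Type*} [Fintype m] [DecidableEq m]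
    (ν : Measure (Matrix m m ℂ)) : Prop :=
  IsProbabilityMeasure ν ∧
    ν (Matrix.specialUnitaryGroup m ℂ : Set (Matrix m m ℂ)) = 1 ∧
    ∀ V ∈ Matrix.specialUnitaryGroup m ℂ, Measure.map (fun W => V * W) ν = ν

end

section Aux

variable {N : ℕ}

local notation "MN" => Matrix (Fin N) (Fin N) ℂ

instance matrixBorelSpace : BorelSpace MN := Pi.borelSpace

instance matrixSecondCountable : SecondCountableTopology MN :=
  inferInstanceAs (SecondCountableTopology (Fin N → Fin N → ℂ))

private lemma aux_GclosedN : IsClosed (Matrix.unitaryGroup (Fin N) ℂ : Set MN) := by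
  have : (Matrix.unitaryGroup (Fin N) ℂ : Set MN) = (fun A : MN => A * star A) ⁻¹' {1} := by
    ext A; simp [Matrix.mem_unitaryGroup_iff, Set.mem_preimage]
  rw [this]
  exact IsClosed.preimage (continuous_id.matrix_mul continuous_id.matrix_conjTranspose)
    isClosed_singleton

private lemma aux_Gcompact : IsCompact (Matrix.unitaryGroup (Fin N) ℂ : Set MN) := by
  have hK : IsCompact (Set.univ.pi fun _ : Fin N =>
      Set.univ.pi fun _ : Fin N => Metric.closedBall (0:ℂ) 1) :=
    isCompact_univ_pi fun _ => isCompact_univ_pi fun _ => isCompact_closedBall 0 1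
  refine hK.of_isClosed_subset aux_GclosedN ?_
  intro A hA i _ j _
  simpa [Complex.dist_eq] using entry_norm_bound_of_unitary hA i j

private lemma aux_Sclosed : IsClosed (Matrix.specialUnitaryGroup (Fin N) ℂ : Set MN) := by
  have : (Matrix.specialUnitaryGroup (Fin N) ℂ : Set MN) =
      (Matrix.unitaryGroup (Fin N) ℂ : Set MN) ∩ ((fun A : MN => A.det) ⁻¹' {1}) := by
    ext A; simp [Matrix.mem_specialUnitaryGroup_iff, Set.mem_preimage]
  rw [this]
  exact aux_GclosedN.inter (IsClosed.preimage continuous_id.matrix_det isClosed_singleton)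

/-- integrability of `f ∘ φ` for `f` continuous and bounded on the unitary group. -/
private lemma aux_integrable {β : Type*} [TopologicalSpace β] [MeasurableSpace β]
    [OpensMeasurableSpace β]
    {f : MN → ℝ}
    (hf : ContinuousOn f (Matrix.unitaryGroup (Fin N) ℂ : Set MN))
    {C : ℝ} (hC : ∀ x ∈ (Matrix.unitaryGroup (Fin N) ℂ : Set MN), ‖f x‖ ≤ C)
    (m : Measure β) [IsProbabilityMeasure m] {T : Set β} (hT : MeasurableSet T)
    (hmT : m T = 1)
    (φ : β → MN) (hφ : Continuous φ)
    (hφT : ∀ y ∈ T, φ y ∈ Matrix.unitaryGroup (Fin N) ℂ) :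
    Integrable (fun y => f (φ y)) m := by
  have hae : ∀ᵐ y ∂m, y ∈ T := by
    rw [ae_iff]
    exact (prob_compl_eq_zero_iff hT).2 hmT
  have hrestrict : m.restrict T = m := Measure.restrict_eq_self_of_ae_mem hae
  have hcont : ContinuousOn (fun y => f (φ y)) T :=
    hf.comp hφ.continuousOn fun y hy => hφT y hy
  have hm : AEMeasurable (fun y => f (φ y)) m := by
    rw [← hrestrict]; exact hcont.aemeasurable hT
  refine Integrable.mono' (integrable_const C) hm.aestronglyMeasurable ?_
  filter_upwards [hae] with y hy
  exact hC _ (hφT y hy)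

end Aux

/-- if `f` is a continuous function on `U(N)` with `f(αX) = f(X)` for every
unimodular scalar `α`, then for every unitary `X`, `∫ f(YX) dν_{SU(N)}(Y) = ∫ f dν_{U(N)}`. -/
theorem stmt10 (N : ℕ) (hN : 0 < N)
    (f : Matrix (Fin N) (Fin N) ℂ → ℝ)
    (hf : ContinuousOn f (Matrix.unitaryGroup (Fin N) ℂ : Set (Matrix (Fin N) (Fin N) ℂ)))
    (hscal : ∀ X ∈ Matrix.unitaryGroup (Fin N) ℂ, ∀ α : ℂ, ‖α‖ = 1 → f (α • X) = f X)
    (ν μ : Measure (Matrix (Fin N) (Fin N) ℂ))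
    (hν : IsHaarSpecialUnitary ν) (hμ : IsHaarUnitary μ) :
    ∀ X ∈ Matrix.unitaryGroup (Fin N) ℂ,
      ∫ Y, f (Y * X) ∂ν = ∫ U, f U ∂μ := by
  obtain ⟨hνP, hνS, hνinv⟩ := hν
  obtain ⟨hμP, hμG, hμinv⟩ := hμ
  haveI := hνP; haveI := hμP
  set G : Set (Matrix (Fin N) (Fin N) ℂ) :=
    (Matrix.unitaryGroup (Fin N) ℂ : Set (Matrix (Fin N) (Fin N) ℂ)) with hGdef
  set S : Set (Matrix (Fin N) (Fin N) ℂ) :=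
    (Matrix.specialUnitaryGroup (Fin N) ℂ : Set (Matrix (Fin N) (Fin N) ℂ)) with hSdef
  have hGm : MeasurableSet G := aux_GclosedN.measurableSet
  have hSm : MeasurableSet S := aux_Sclosed.measurableSet
  have hSsubG : S ⊆ G := fun A hA => (Matrix.mem_specialUnitaryGroup_iff.1 hA).1
  obtain ⟨C, hC⟩ := aux_Gcompact.exists_bound_of_continuousOn hf
  -- a.e. membership
  have haeν : ∀ᵐ Y ∂ν, Y ∈ S := by
    rw [ae_iff]; exact (prob_compl_eq_zero_iff hSm).2 hνS
  have haeμ : ∀ᵐ U ∂μ, U ∈ G := by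
    rw [ae_iff]; exact (prob_compl_eq_zero_iff hGm).2 hμG
  -- measurability of basic maps
  have hctm : Measurable (fun A : Matrix (Fin N) (Fin N) ℂ => Aᴴ) :=
    (continuous_id.matrix_conjTranspose).measurable
  have hmulLm : ∀ V : Matrix (Fin N) (Fin N) ℂ, Measurable (fun W => V * W) :=
    fun V => (continuous_const.matrix_mul continuous_id).measurable
  have hmulRm : ∀ V : Matrix (Fin N) (Fin N) ℂ, Measurable (fun W => W * V) :=
    fun V => (continuous_id.matrix_mul continuous_const).measurable
  -- the reflected measure ρ
  set ρ : Measure (Matrix (Fin N) (Fin N) ℂ) := Measure.map (fun A => Aᴴ) ν with hρdef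
  haveI hρP : IsProbabilityMeasure ρ := Measure.isProbabilityMeasure_map hctm.aemeasurable
  have hstar1 : ∀ A : Matrix (Fin N) (Fin N) ℂ, A ∈ S → Aᴴ ∈ S := by
    intro A hA
    rcases Matrix.mem_specialUnitaryGroup_iff.1 hA with ⟨h1, h2⟩
    exact Matrix.mem_specialUnitaryGroup_iff.2
      ⟨Unitary.star_mem h1, by rw [Matrix.det_conjTranspose, h2]; simp⟩
  have hstarS : ∀ A, A ∈ S ↔ Aᴴ ∈ S := by
    intro A
    refine ⟨hstar1 A, fun h => ?_⟩
    have := hstar1 _ h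
    simpa using this
  have hρS : ρ S = 1 := by
    rw [hρdef, Measure.map_apply hctm hSm]
    have : (fun A : Matrix (Fin N) (Fin N) ℂ => Aᴴ) ⁻¹' S = S := by
      ext A; exact (hstarS A).symm
    rw [this, hνS]
  have haeρ : ∀ᵐ W ∂ρ, W ∈ S := by
    rw [ae_iff]; exact (prob_compl_eq_zero_iff hSm).2 hρS
  -- right invariance of ρ
  have hρinv : ∀ V ∈ S, Measure.map (fun W => W * V) ρ = ρ := by
    intro V hV
    have hVd : Vᴴ ∈ Matrix.specialUnitaryGroup (Fin N) ℂ := (hstarS V).1 hV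
    rw [hρdef, Measure.map_map (hmulRm V) hctm]
    have : ((fun W => W * V) ∘ fun A : Matrix (Fin N) (Fin N) ℂ => Aᴴ)
        = (fun A : Matrix (Fin N) (Fin N) ℂ => Aᴴ) ∘ (fun W => Vᴴ * W) := by
      funext A; simp [Function.comp, Matrix.conjTranspose_mul]
    rw [this, ← Measure.map_map hctm (hmulLm Vᴴ), hνinv Vᴴ hVd]
  -- translation formulas for integrals
  have hleft : ∀ (m : Measure (Matrix (Fin N) (Fin N) ℂ)) (V : Matrix (Fin N) (Fin N) ℂ),
      Measure.map (fun W => V * W) m = m →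
      ∀ g : Matrix (Fin N) (Fin N) ℂ → ℝ, AEStronglyMeasurable g m →
      ∫ Y, g (V * Y) ∂m = ∫ Y, g Y ∂m := by
    intro m V hinv g hg
    conv_rhs => rw [← hinv]
    rw [integral_map (hmulLm V).aemeasurable (hinv.symm ▸ hg)]
  have hright : ∀ (m : Measure (Matrix (Fin N) (Fin N) ℂ)) (V : Matrix (Fin N) (Fin N) ℂ),
      Measure.map (fun W => W * V) m = m →
      ∀ g : Matrix (Fin N) (Fin N) ℂ → ℝ, AEStronglyMeasurable g m →
      ∫ Y, g (Y * V) ∂m = ∫ Y, g Y ∂m := by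
    intro m V hinv g hg
    conv_rhs => rw [← hinv]
    rw [integral_map (hmulRm V).aemeasurable (hinv.symm ▸ hg)]
  -- integrability facts
  have intν : ∀ B ∈ G, Integrable (fun Y => f (Y * B)) ν := by
    intro B hB
    exact aux_integrable hf hC ν hSm hνS (fun Y => Y * B)
      (continuous_id.matrix_mul continuous_const)
      (fun Y hY => mul_mem (hSsubG hY) hB)
  have intρ : Integrable f ρ := by
    have := aux_integrable hf hC ρ hSm hρS id continuous_id (fun Y hY => hSsubG hY)
    simpa using this
  have intμ : Integrable f μ := by
    have := aux_integrable hf hC μ hGm hμG id continuous_id (fun Y hY => hY)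
    simpa using this
  -- Key: for Z ∈ S, ∫ f(YZ) dν = ∫ f dρ
  have key : ∀ Z ∈ S, ∫ Y, f (Y * Z) ∂ν = ∫ W, f W ∂ρ := by
    intro Z hZ
    have hZG : Z ∈ G := hSsubG hZ
    haveI : IsProbabilityMeasure (ρ.prod ν) := by infer_instance
    have hprodm : MeasurableSet (S ×ˢ S : Set (Matrix (Fin N) (Fin N) ℂ ×
        Matrix (Fin N) (Fin N) ℂ)) := hSm.prod hSm
    have hprod1 : (ρ.prod ν) (S ×ˢ S) = 1 := by
      rw [Measure.prod_prod, hρS, hνS, one_mul]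
    have hint : Integrable (Function.uncurry fun W Y => f (W * Y * Z)) (ρ.prod ν) := by
      have := aux_integrable hf hC (ρ.prod ν) hprodm hprod1
        (fun p => p.1 * p.2 * Z)
        ((continuous_fst.matrix_mul continuous_snd).matrix_mul continuous_const)
        (fun p hp => mul_mem (mul_mem (hSsubG hp.1) (hSsubG hp.2)) hZG)
      exact this
    have step1 : ∫ Y, f (Y * Z) ∂ν = ∫ W, (∫ Y, f (W * Y * Z) ∂ν) ∂ρ := by
      have hc : ∫ W, (∫ Y, f (W * Y * Z) ∂ν) ∂ρ
          = ∫ _W, (∫ Y, f (Y * Z) ∂ν) ∂ρ := by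
        apply integral_congr_ae
        filter_upwards [haeρ] with W hW
        have := hleft ν W (hνinv W hW) (fun Y => f (Y * Z))
          (intν Z hZG).aestronglyMeasurable
        simpa [mul_assoc] using this
      rw [hc, integral_const]
      simp [measure_univ]
    have step2 : ∫ W, (∫ Y, f (W * Y * Z) ∂ν) ∂ρ
        = ∫ Y, (∫ W, f (W * Y * Z) ∂ρ) ∂ν := integral_integral_swap hint
    have step3 : ∫ Y, (∫ W, f (W * Y * Z) ∂ρ) ∂ν = ∫ W, f W ∂ρ := by
      have hc : ∫ Y, (∫ W, f (W * Y * Z) ∂ρ) ∂ν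
          = ∫ _Y, (∫ W, f W ∂ρ) ∂ν := by
        apply integral_congr_ae
        filter_upwards [haeν] with Y hY
        have hYZ : Y * Z ∈ S := mul_mem hY hZ
        have := hright ρ (Y * Z) (hρinv (Y * Z) hYZ) f intρ.aestronglyMeasurable
        simpa [mul_assoc] using this
      rw [hc, integral_const]
      simp [measure_univ]
    rw [step1, step2, step3]
  -- For any unitary U, ∫ f(YU) dν = ∫ f dρ
  have gconst : ∀ U ∈ G, ∫ Y, f (Y * U) ∂ν = ∫ W, f W ∂ρ := by
    intro U hU
    -- pick an N-th root of det U
    obtain ⟨α, hα⟩ := IsAlgClosed.exists_pow_nat_eq (k := ℂ) U.det hN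
    have hdetu : U.det ∈ unitary ℂ := Matrix.det_of_mem_unitary hU
    have hdet1 : ‖U.det‖ = 1 := by
      have h1 : star U.det * U.det = 1 := hdetu.1
      have h2 : Complex.normSq U.det = 1 := by
        have := congrArg Complex.re h1
        simpa [Complex.normSq, Complex.mul_re, mul_comm] using this
      have h3 : ‖U.det‖ ^ 2 = 1 := by
        rw [← Complex.sq_norm U.det] at h2
        simpa using h2
      nlinarith [norm_nonneg U.det]
    have hα1 : ‖α‖ = 1 := by
      have h : ‖α‖ ^ N = 1 := by rw [← norm_pow, hα, hdet1]
      rcases lt_trichotomy ‖α‖ 1 with hlt | heq | hgt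
      · exfalso
        have := pow_lt_one₀ (norm_nonneg α) hlt hN.ne'
        linarith
      · exact heq
      · exfalso
        have := one_lt_pow₀ hgt hN.ne'
        linarith
    have hα0 : α ≠ 0 := by
      intro h; rw [h] at hα1; simp at hα1
    -- the special unitary representative
    set Z : Matrix (Fin N) (Fin N) ℂ := α⁻¹ • U with hZdef
    have hαinv : ‖(α⁻¹ : ℂ)‖ = 1 := by
      rw [norm_inv, hα1]; norm_num
    have hZG : Z ∈ G := by
      show Z ∈ Matrix.unitaryGroup (Fin N) ℂ
      rw [Matrix.mem_unitaryGroup_iff]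
      have hU1 : U * star U = 1 := Matrix.mem_unitaryGroup_iff.1 hU
      have hstZ : star Z = (starRingEnd ℂ) α⁻¹ • star U := by
        rw [hZdef]; exact star_smul _ _
      rw [hZdef, hstZ, smul_mul_smul_comm, hU1]
      have : α⁻¹ * (starRingEnd ℂ) α⁻¹ = 1 := by
        have := Complex.mul_conj α⁻¹
        rw [this]
        norm_cast
        rw [Complex.normSq_eq_norm_sq]
        have : ‖α⁻¹‖ = 1 := hαinv
        rw [this]; norm_num
      rw [this, one_smul]
    have hZS : Z ∈ S := by
      refine Matrix.mem_specialUnitaryGroup_iff.2 ⟨hZG, ?_⟩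
      rw [hZdef, Matrix.det_smul]
      have hcard : Fintype.card (Fin N) = N := Fintype.card_fin N
      rw [hcard, inv_pow, hα]
      have hdet0 : U.det ≠ 0 := by
        intro h; rw [h] at hdet1; simp at hdet1
      field_simp
    have hUZ : U = α • Z := by
      rw [hZdef, smul_smul, mul_inv_cancel₀ hα0, one_smul]
    have hcong : ∫ Y, f (Y * U) ∂ν = ∫ Y, f (Y * Z) ∂ν := by
      apply integral_congr_ae
      filter_upwards [haeν] with Y hY
      have hYZ : Y * Z ∈ Matrix.unitaryGroup (Fin N) ℂ := mul_mem (hSsubG hY) hZG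
      calc f (Y * U) = f (Y * (α • Z)) := by rw [← hUZ]
        _ = f (α • (Y * Z)) := by rw [mul_smul_comm]
        _ = f (Y * Z) := hscal _ hYZ α hα1
    rw [hcong, key Z hZS]
  -- ∫ f dμ = ∫ f dρ
  have hμρ : ∫ U, f U ∂μ = ∫ W, f W ∂ρ := by
    haveI : IsProbabilityMeasure (ν.prod μ) := by infer_instance
    have hprodm : MeasurableSet (S ×ˢ G : Set (Matrix (Fin N) (Fin N) ℂ ×
        Matrix (Fin N) (Fin N) ℂ)) := hSm.prod hGm
    have hprod1 : (ν.prod μ) (S ×ˢ G) = 1 := by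
      rw [Measure.prod_prod, hνS, hμG, one_mul]
    have hint : Integrable (Function.uncurry fun Y U => f (Y * U)) (ν.prod μ) := by
      have := aux_integrable hf hC (ν.prod μ) hprodm hprod1
        (fun p => p.1 * p.2)
        (continuous_fst.matrix_mul continuous_snd)
        (fun p hp => mul_mem (hSsubG hp.1) hp.2)
      exact this
    have step1 : ∫ U, f U ∂μ = ∫ Y, (∫ U, f (Y * U) ∂μ) ∂ν := by
      have hc : ∫ Y, (∫ U, f (Y * U) ∂μ) ∂ν = ∫ _Y, (∫ U, f U ∂μ) ∂ν := by
        apply integral_congr_ae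
        filter_upwards [haeν] with Y hY
        exact hleft μ Y (hμinv Y (hSsubG hY)) f intμ.aestronglyMeasurable
      rw [hc, integral_const]
      simp [measure_univ]
    have step2 : ∫ Y, (∫ U, f (Y * U) ∂μ) ∂ν = ∫ U, (∫ Y, f (Y * U) ∂ν) ∂μ :=
      integral_integral_swap hint
    have step3 : ∫ U, (∫ Y, f (Y * U) ∂ν) ∂μ = ∫ W, f W ∂ρ := by
      have hc : ∫ U, (∫ Y, f (Y * U) ∂ν) ∂μ = ∫ _U, (∫ W, f W ∂ρ) ∂μ := by
        apply integral_congr_ae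
        filter_upwards [haeμ] with U hU
        exact gconst U hU
      rw [hc, integral_const]
      simp [measure_univ]
    rw [step1, step2, step3]
  intro X hX
  rw [gconst X hX, hμρ]
end

section
/- Let k be a positive integer, let 0 < ε ≤ e^{-1}, and let A, B ∈ D_k be density matrices with ‖A − B‖₂ ≤ ε. Then | H(A) − H(B) | ≤ 3kε|ln(ε)|, where H(X) = −tr(X ln X) is the von Neumann entropy. -/
open scoped ComplexOrder
open Matrix

/-! ### Auxiliary scalar lemmas -/

/-- Monotonicity of `t ↦ -t ln t` on `[0, e⁻¹]`. -/
private lemma aux_eta_mono {d ε : ℝ} (hd : 0 ≤ d) (hdε : d ≤ ε) (hε1 : ε ≤ Real.exp (-1)) :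
    -(d * Real.log d) ≤ -(ε * Real.log ε) := by
  rcases eq_or_lt_of_le hd with rfl | hd0
  · simp only [Real.log_zero, mul_zero, neg_zero]
    have hε0 : 0 ≤ ε := hdε
    have : Real.log ε ≤ 0 := by
      rcases eq_or_lt_of_le hε0 with rfl | h
      · simp
      · exact Real.log_nonpos h.le (hε1.trans (by rw [Real.exp_le_one_iff]; norm_num))
    nlinarith
  · have hε0 : 0 < ε := lt_of_lt_of_le hd0 hdε
    have hlogε : Real.log ε ≤ -1 := by
      calc Real.log ε ≤ Real.log (Real.exp (-1)) := Real.log_le_log hε0 hε1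
      _ = -1 := Real.log_exp _
    set r : ℝ := d / ε with hr
    have hr0 : 0 < r := div_pos hd0 hε0
    have hr1 : r ≤ 1 := (div_le_one hε0).mpr hdε
    have hlogr : -Real.log r ≤ 1 / r - 1 := by
      have := Real.log_le_sub_one_of_pos (x := 1 / r) (by positivity)
      rwa [Real.log_div one_ne_zero hr0.ne', Real.log_one, zero_sub] at this
    have hd' : d = r * ε := by rw [hr]; field_simp
    have expand : d * Real.log d = r * ε * (Real.log r + Real.log ε) := by
      rw [hd', Real.log_mul hr0.ne' hε0.ne']
    rw [expand]
    have key : r * (-Real.log r) ≤ 1 - r := by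
      have := mul_le_mul_of_nonneg_left hlogr hr0.le
      rw [mul_sub, mul_one_div, div_self hr0.ne', mul_one] at this
      linarith
    have h1 : ε * (r * (-Real.log r)) ≤ ε * (1 - r) :=
      mul_le_mul_of_nonneg_left key hε0.le
    have h2 : ε * (1 - r) * 1 ≤ ε * (1 - r) * (-Real.log ε) :=
      mul_le_mul_of_nonneg_left (by linarith) (by nlinarith)
    nlinarith [h1, h2]

private lemma aux_eta_upper {x d : ℝ} (hx : 0 ≤ x) (hd : 0 ≤ d) :
    -((x + d) * Real.log (x + d)) ≤ -(x * Real.log x) + -(d * Real.log d) := by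
  rcases eq_or_lt_of_le hd with rfl | hd0
  · simp
  rcases eq_or_lt_of_le hx with rfl | hx0
  · simp
  have h1 : x * Real.log x ≤ x * Real.log (x + d) :=
    mul_le_mul_of_nonneg_left (Real.log_le_log hx0 (by linarith)) hx
  have h2 : d * Real.log d ≤ d * Real.log (x + d) :=
    mul_le_mul_of_nonneg_left (Real.log_le_log hd0 (by linarith)) hd
  nlinarith [h1, h2]

private lemma aux_eta_lower {x d : ℝ} (hx : 0 ≤ x) (hd : 0 ≤ d) (h1 : x + d ≤ 1) :
    -(x * Real.log x) - (-((x + d) * Real.log (x + d))) ≤ d := by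
  rcases eq_or_lt_of_le hx with rfl | hx0
  · simp only [Real.log_zero, mul_zero, neg_zero, zero_sub, neg_neg, zero_add]
    have : Real.log d ≤ 0 := Real.log_nonpos hd (by linarith)
    nlinarith
  have hy0 : 0 < x + d := by linarith
  have hlogy : Real.log (x + d) ≤ 0 := Real.log_nonpos hy0.le h1
  have ha : x * Real.log (x + d) - x * Real.log x ≤ d := by
    have e : Real.log (x + d) - Real.log x = Real.log ((x + d) / x) :=
      (Real.log_div hy0.ne' hx0.ne').symm
    have h2 : Real.log ((x + d) / x) ≤ (x + d) / x - 1 :=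
      Real.log_le_sub_one_of_pos (by positivity)
    have h3 := mul_le_mul_of_nonneg_left h2 hx0.le
    rw [← e, mul_sub, mul_sub, mul_one, mul_div_cancel₀ _ hx0.ne'] at h3
    linarith
  have hb : d * Real.log (x + d) ≤ 0 := mul_nonpos_of_nonneg_of_nonpos hd hlogy
  nlinarith [ha, hb]

/-- Key scalar estimate: `x ↦ x ln x` on `[0,1]` is `(ε, ε|ln ε|)`-continuous. -/
private lemma aux_eta_close {x y ε : ℝ} (hx0 : 0 ≤ x) (hx1 : x ≤ 1) (hy0 : 0 ≤ y) (hy1 : y ≤ 1)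
    (hε : 0 < ε) (hε1 : ε ≤ Real.exp (-1)) (hxy : |x - y| ≤ ε) :
    |x * Real.log x - y * Real.log y| ≤ ε * |Real.log ε| := by
  have hlogε : Real.log ε ≤ -1 := by
    calc Real.log ε ≤ Real.log (Real.exp (-1)) := Real.log_le_log hε hε1
    _ = -1 := Real.log_exp _
  have habs : |Real.log ε| = -Real.log ε := abs_of_neg (by linarith)
  rw [habs]
  wlog hxy' : x ≤ y generalizing x y
  · rw [abs_sub_comm] at hxy ⊢
    exact this hy0 hy1 hx0 hx1 hxy (le_of_not_ge hxy')
  obtain ⟨d, hd0, rfl⟩ : ∃ d, 0 ≤ d ∧ y = x + d := ⟨y - x, by linarith, by ring⟩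
  have hdε : d ≤ ε := by
    rw [abs_sub_comm, abs_of_nonneg (by linarith : (0:ℝ) ≤ x + d - x)] at hxy; linarith
  rw [abs_le]
  constructor
  · have := aux_eta_lower hx0 hd0 hy1
    nlinarith
  · have h1 := aux_eta_upper hx0 hd0
    have h2 := aux_eta_mono hd0 hdε hε1
    nlinarith

/-! ### Auxiliary matrix lemmas -/

/-- General trace identity for products of conjugated diagonal matrices. -/
private lemma aux_trace_pair {n : Type*} [Fintype n] [DecidableEq n]
    (U V : Matrix n n ℂ) (a b : n → ℝ) :
    trace ((U * diagonal (Complex.ofReal ∘ a) * star U) *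
        (V * diagonal (Complex.ofReal ∘ b) * star V))
      = ((∑ i, ∑ j, a i * b j * Complex.normSq ((star U * V) i j) : ℝ) : ℂ) := by
  set Da := diagonal (Complex.ofReal ∘ a)
  set Db := diagonal (Complex.ofReal ∘ b)
  set W := star U * V with hW
  have hsW : star V * U = star W := by
    rw [hW, Matrix.star_mul, star_star]
  have key : (U * Da * star U) * (V * Db * star V) = U * (Da * star U * V * Db * star V) := by
    simp only [Matrix.mul_assoc]
  rw [key, trace_mul_comm]
  have key2 : Da * star U * V * Db * star V * U = Da * W * Db * star W := by
    rw [← hsW, hW]; simp only [Matrix.mul_assoc]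
  rw [key2]
  have entry : ∀ i, (Da * W * Db * star W) i i
      = ∑ j, (a i : ℂ) * W i j * (b j : ℂ) * star (W i j) := by
    intro i
    rw [Matrix.mul_apply]
    refine Finset.sum_congr rfl fun j _ => ?_
    rw [Matrix.mul_diagonal, Matrix.diagonal_mul, Matrix.star_apply]
    simp [Da, Db, mul_assoc]
  rw [Matrix.trace]
  push_cast
  simp only [Matrix.diag_apply]
  rw [Finset.sum_congr rfl fun i _ => entry i]
  refine Finset.sum_congr rfl fun i _ => Finset.sum_congr rfl fun j _ => ?_
  have hstar : (star (W i j)) = (starRingEnd ℂ) (W i j) := rfl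
  rw [hstar, show (a i : ℂ) * W i j * (b j : ℂ) * (starRingEnd ℂ) (W i j)
      = (a i : ℂ) * (b j : ℂ) * (W i j * (starRingEnd ℂ) (W i j)) by ring, Complex.mul_conj]

private lemma aux_normSq_row_sum {n : Type*} [Fintype n] [DecidableEq n]
    {W : Matrix n n ℂ} (hW : W * star W = 1) (i : n) :
    ∑ j, Complex.normSq (W i j) = 1 := by
  have h := congrArg (fun M : Matrix n n ℂ => M i i) hW
  simp only [Matrix.mul_apply, Matrix.one_apply_eq] at h
  have : (((∑ j, Complex.normSq (W i j) : ℝ)) : ℂ) = 1 := by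
    push_cast
    rw [← h]
    refine Finset.sum_congr rfl fun j _ => ?_
    rw [Matrix.star_apply, show (star (W i j)) = (starRingEnd ℂ) (W i j) from rfl,
      Complex.mul_conj]
  exact_mod_cast this

private lemma aux_normSq_col_sum {n : Type*} [Fintype n] [DecidableEq n]
    {W : Matrix n n ℂ} (hW : star W * W = 1) (j : n) :
    ∑ i, Complex.normSq (W i j) = 1 := by
  have h := congrArg (fun M : Matrix n n ℂ => M j j) hW
  simp only [Matrix.mul_apply, Matrix.one_apply_eq] at h
  have : (((∑ i, Complex.normSq (W i j) : ℝ)) : ℂ) = 1 := by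
    push_cast
    rw [← h]
    refine Finset.sum_congr rfl fun i _ => ?_
    rw [Matrix.star_apply, show (star (W i j)) = (starRingEnd ℂ) (W i j) from rfl,
      mul_comm, Complex.mul_conj]
  exact_mod_cast this

private lemma aux_perm_sum {n : Type*} [Fintype n] [DecidableEq n]
    (σ : Equiv.Perm n) (q : n → n → ℝ) :
    ∑ i, ∑ j, (σ.permMatrix ℝ) i j * q i j = ∑ i, q i (σ i) := by
  refine Finset.sum_congr rfl fun i _ => ?_
  simp [Equiv.Perm.permMatrix, PEquiv.toMatrix_apply, Equiv.toPEquiv_apply,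
    ite_mul, one_mul, zero_mul, Finset.sum_ite_eq]

private lemma aux_sum_normSq_one {n : Type*} [Fintype n] [DecidableEq n] (a b : n → ℝ) :
    ∑ i, ∑ j, a i * b j * Complex.normSq ((1 : Matrix n n ℂ) i j) = ∑ i, a i * b i := by
  refine Finset.sum_congr rfl fun i _ => ?_
  simp [Matrix.one_apply, apply_ite Complex.normSq, mul_ite, Finset.sum_ite_eq]

/-- Lipschitz-type continuity of the von Neumann entropy.  For density
matrices `A, B` of size `k` with `‖A - B‖₂ ≤ ε` and `0 < ε ≤ e⁻¹`, one has
`|H(A) - H(B)| ≤ 3kε|ln ε|`. -/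
theorem stmt13 (k : ℕ) (hk : 0 < k) (ε : ℝ) (hε : 0 < ε) (hε1 : ε ≤ Real.exp (-1))
    (A B : Matrix (Fin k) (Fin k) ℂ) (hA : IsDensity A) (hB : IsDensity B)
    (hAB : frob (A - B) ≤ ε) :
    |vnEntropy A - vnEntropy B| ≤ 3 * k * ε * |Real.log ε| := by
  obtain ⟨hApsd, hAtr⟩ := hA
  obtain ⟨hBpsd, hBtr⟩ := hB
  have hHA : A.IsHermitian := hApsd.1
  have hHB : B.IsHermitian := hBpsd.1
  set lam : Fin k → ℝ := hHA.eigenvalues with hlam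
  set mu : Fin k → ℝ := hHB.eigenvalues with hmu
  set Uc : Matrix (Fin k) (Fin k) ℂ := (hHA.eigenvectorUnitary : Matrix (Fin k) (Fin k) ℂ) with hUcdef
  set Vc : Matrix (Fin k) (Fin k) ℂ := (hHB.eigenvectorUnitary : Matrix (Fin k) (Fin k) ℂ) with hVcdef
  have hAeq : A = Uc * diagonal (Complex.ofReal ∘ lam) * star Uc := hHA.spectral_theorem
  have hBeq : B = Vc * diagonal (Complex.ofReal ∘ mu) * star Vc := hHB.spectral_theorem
  have hU1 : star Uc * Uc = 1 := mem_unitaryGroup_iff'.mp hHA.eigenvectorUnitary.2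
  have hU2 : Uc * star Uc = 1 := mem_unitaryGroup_iff.mp hHA.eigenvectorUnitary.2
  have hV1 : star Vc * Vc = 1 := mem_unitaryGroup_iff'.mp hHB.eigenvectorUnitary.2
  have hV2 : Vc * star Vc = 1 := mem_unitaryGroup_iff.mp hHB.eigenvectorUnitary.2
  set S : Fin k → Fin k → ℝ := fun i j => Complex.normSq ((star Uc * Vc) i j) with hSdef
  -- unitarity of W = star Uc * Vc
  have hWr : (star Uc * Vc) * star (star Uc * Vc) = 1 := by
    rw [Matrix.star_mul, star_star]
    calc star Uc * Vc * (star Vc * Uc) = star Uc * (Vc * star Vc) * Uc := by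
          simp only [Matrix.mul_assoc]
    _ = 1 := by rw [hV2, Matrix.mul_one, hU1]
  have hWl : star (star Uc * Vc) * (star Uc * Vc) = 1 := by
    rw [Matrix.star_mul, star_star]
    calc star Vc * Uc * (star Uc * Vc) = star Vc * (Uc * star Uc) * Vc := by
          simp only [Matrix.mul_assoc]
    _ = 1 := by rw [hU2, Matrix.mul_one, hV1]
  have hSrow : ∀ i, ∑ j, S i j = 1 := fun i => aux_normSq_row_sum hWr i
  have hScol : ∀ j, ∑ i, S i j = 1 := fun j => aux_normSq_col_sum hWl j
  have hSnn : ∀ i j, 0 ≤ S i j := fun i j => Complex.normSq_nonneg _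
  -- eigenvalues sum to 1 and lie in [0,1]
  have hlamsum : ∑ i, lam i = 1 := by
    have h1 : trace A = ((∑ i, lam i : ℝ) : ℂ) := by
      rw [hAeq, trace_mul_cycle, hU1, Matrix.one_mul, trace_diagonal]
      push_cast; rfl
    rw [hAtr] at h1
    exact_mod_cast h1.symm
  have hmusum : ∑ i, mu i = 1 := by
    have h1 : trace B = ((∑ i, mu i : ℝ) : ℂ) := by
      rw [hBeq, trace_mul_cycle, hV1, Matrix.one_mul, trace_diagonal]
      push_cast; rfl
    rw [hBtr] at h1
    exact_mod_cast h1.symm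
  have hlam0 : ∀ i, 0 ≤ lam i := fun i => hApsd.eigenvalues_nonneg i
  have hmu0 : ∀ i, 0 ≤ mu i := fun i => hBpsd.eigenvalues_nonneg i
  have hlam1 : ∀ i, lam i ≤ 1 := by
    intro i
    rw [← hlamsum]
    exact Finset.single_le_sum (fun j _ => hlam0 j) (Finset.mem_univ i)
  have hmu1 : ∀ i, mu i ≤ 1 := by
    intro i
    rw [← hmusum]
    exact Finset.single_le_sum (fun j _ => hmu0 j) (Finset.mem_univ i)
  -- the Frobenius norm computation
  set T : ℝ := ∑ i, ∑ j, S i j * (lam i - mu j)^2 with hTdef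
  have hT0 : 0 ≤ T :=
    Finset.sum_nonneg fun i _ => Finset.sum_nonneg fun j _ =>
      mul_nonneg (hSnn i j) (sq_nonneg _)
  have htrace : trace ((A - B)ᴴ * (A - B)) = (T : ℂ) := by
    have hsub : (A - B)ᴴ = A - B := by rw [conjTranspose_sub, hHA, hHB]
    have expand : (A - B) * (A - B) = A*A - A*B - (B*A - B*B) := by
      rw [sub_mul, mul_sub, mul_sub]
    have tAA : trace (A*A) = ((∑ i, lam i * lam i : ℝ) : ℂ) := by
      rw [hAeq, aux_trace_pair, hU1, aux_sum_normSq_one]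
    have tBB : trace (B*B) = ((∑ i, mu i * mu i : ℝ) : ℂ) := by
      rw [hBeq, aux_trace_pair, hV1, aux_sum_normSq_one]
    have tAB : trace (A*B) = ((∑ i, ∑ j, lam i * mu j * S i j : ℝ) : ℂ) := by
      rw [hAeq, hBeq, aux_trace_pair]
    have tBA : trace (B*A) = ((∑ i, ∑ j, lam i * mu j * S i j : ℝ) : ℂ) := by
      rw [trace_mul_comm]; exact tAB
    rw [hsub, expand, trace_sub, trace_sub, trace_sub, tAA, tAB, tBA, tBB]
    have hTval : T = (∑ i, lam i * lam i) + (∑ i, mu i * mu i)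
        - 2 * ∑ i, ∑ j, lam i * mu j * S i j := by
      have e1 : T = ∑ i, ∑ j, (lam i * lam i * S i j
          - 2 * (lam i * mu j * S i j) + mu j * mu j * S i j) := by
        rw [hTdef]
        exact Finset.sum_congr rfl fun i _ => Finset.sum_congr rfl fun j _ => by ring
      have e2 : ∑ i, ∑ j, lam i * lam i * S i j = ∑ i, lam i * lam i := by
        refine Finset.sum_congr rfl fun i _ => ?_
        rw [← Finset.mul_sum, hSrow, mul_one]
      have e3 : ∑ i, ∑ j, mu j * mu j * S i j = ∑ i, mu i * mu i := by
        rw [Finset.sum_comm]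
        refine Finset.sum_congr rfl fun j _ => ?_
        rw [← Finset.mul_sum, hScol, mul_one]
      have d1 : ∀ i, ∑ j, (lam i * lam i * S i j
          - 2 * (lam i * mu j * S i j) + mu j * mu j * S i j)
          = (∑ j, lam i * lam i * S i j) - 2 * (∑ j, lam i * mu j * S i j)
            + ∑ j, mu j * mu j * S i j := by
        intro i
        rw [Finset.sum_add_distrib, Finset.sum_sub_distrib, Finset.mul_sum]
      rw [e1, Finset.sum_congr rfl fun i _ => d1 i, Finset.sum_add_distrib,
        Finset.sum_sub_distrib, ← Finset.mul_sum, e2, e3]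
      ring
    rw [hTval]
    push_cast
    ring
  have hTε : T ≤ ε^2 := by
    have hfrob : frob (A - B) = Real.sqrt T := by
      rw [frob, htrace, Complex.ofReal_re]
    rw [hfrob] at hAB
    calc T = (Real.sqrt T)^2 := (Real.sq_sqrt hT0).symm
    _ ≤ ε^2 := pow_le_pow_left₀ (Real.sqrt_nonneg _) hAB 2
  -- Birkhoff
  have hSds : (Matrix.of S) ∈ doublyStochastic ℝ (Fin k) := by
    rw [mem_doublyStochastic_iff_sum]
    exact ⟨fun i j => hSnn i j, hSrow, hScol⟩
  obtain ⟨w, hw0, hw1, hwS⟩ := exists_eq_sum_perm_of_mem_doublyStochastic hSds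
  set c : Equiv.Perm (Fin k) → ℝ := fun σ => ∑ i, (lam i - mu (σ i))^2 with hcdef
  have hc0 : ∀ σ, 0 ≤ c σ := fun σ => Finset.sum_nonneg fun i _ => sq_nonneg _
  have hSentry : ∀ i j, S i j = ∑ σ : Equiv.Perm (Fin k), w σ * (σ.permMatrix ℝ) i j := by
    intro i j
    have := congrArg (fun M : Matrix (Fin k) (Fin k) ℝ => M i j) hwS
    simp only [Finset.sum_apply, Matrix.sum_apply, Matrix.smul_apply, smul_eq_mul,
      Matrix.of_apply] at this
    exact this.symm
  have hTc : T = ∑ σ : Equiv.Perm (Fin k), w σ * c σ := by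
    have s1 : T = ∑ i, ∑ j, ∑ σ : Equiv.Perm (Fin k),
        w σ * ((σ.permMatrix ℝ) i j * (lam i - mu j)^2) := by
      rw [hTdef]
      refine Finset.sum_congr rfl fun i _ => Finset.sum_congr rfl fun j _ => ?_
      rw [hSentry i j, Finset.sum_mul]
      exact Finset.sum_congr rfl fun σ _ => by ring
    have s2 : (∑ i, ∑ j, ∑ σ : Equiv.Perm (Fin k),
          w σ * ((σ.permMatrix ℝ) i j * (lam i - mu j)^2))
        = ∑ σ : Equiv.Perm (Fin k), ∑ i, ∑ j,
          w σ * ((σ.permMatrix ℝ) i j * (lam i - mu j)^2) := by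
      rw [Finset.sum_congr rfl fun i (_ : i ∈ Finset.univ) => Finset.sum_comm, Finset.sum_comm]
    rw [s1, s2]
    refine Finset.sum_congr rfl fun σ _ => ?_
    show _ = w σ * ∑ i, (lam i - mu (σ i))^2
    rw [← aux_perm_sum σ (fun i j => (lam i - mu j)^2)]
    simp only [← Finset.mul_sum]
  -- pick a permutation with small deviation
  set F : Finset (Equiv.Perm (Fin k)) := Finset.univ.filter (fun σ => w σ ≠ 0) with hFdef
  have hFsum : ∑ σ ∈ F, w σ = 1 := by
    rw [hFdef, Finset.sum_filter_ne_zero]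
    exact hw1
  have hFne : F.Nonempty := by
    by_contra h
    rw [Finset.not_nonempty_iff_eq_empty] at h
    rw [h, Finset.sum_empty] at hFsum
    norm_num at hFsum
  obtain ⟨σ₀, hσ₀F, hmin⟩ := F.exists_min_image c hFne
  have hcσ₀ : c σ₀ ≤ T := by
    have h1 : T = ∑ σ ∈ F, w σ * c σ := by
      rw [hTc]
      refine (Finset.sum_subset (Finset.filter_subset _ _) fun σ _ hσ => ?_).symm
      simp only [hFdef, Finset.mem_filter, Finset.mem_univ, true_and, not_not] at hσ
      rw [hσ, zero_mul]
    have h2 : ∑ σ ∈ F, w σ * c σ₀ ≤ ∑ σ ∈ F, w σ * c σ :=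
      Finset.sum_le_sum fun σ hσ => mul_le_mul_of_nonneg_left (hmin σ hσ) (hw0 σ)
    rw [← Finset.sum_mul, hFsum, one_mul] at h2
    linarith [h1 ▸ h2]
  have hclose : ∀ i, |lam i - mu (σ₀ i)| ≤ ε := by
    intro i
    have h1 : (lam i - mu (σ₀ i))^2 ≤ c σ₀ :=
      Finset.single_le_sum (fun j (_ : j ∈ Finset.univ) => sq_nonneg (lam j - mu (σ₀ j)))
        (Finset.mem_univ i)
    have h2 : (lam i - mu (σ₀ i))^2 ≤ ε^2 := by linarith
    calc |lam i - mu (σ₀ i)| = Real.sqrt ((lam i - mu (σ₀ i))^2) := (Real.sqrt_sq_eq_abs _).symm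
    _ ≤ Real.sqrt (ε^2) := Real.sqrt_le_sqrt h2
    _ = ε := Real.sqrt_sq hε.le
  -- entropy computation
  have hHAval : vnEntropy A = -∑ i, lam i * Real.log (lam i) := by
    rw [vnEntropy, dif_pos hHA]
  have hHBval : vnEntropy B = -∑ i, mu i * Real.log (mu i) := by
    rw [vnEntropy, dif_pos hHB]
  have hBperm : ∑ i, mu i * Real.log (mu i) = ∑ i, mu (σ₀ i) * Real.log (mu (σ₀ i)) :=
    (Equiv.sum_comp σ₀ fun i => mu i * Real.log (mu i)).symm
  have hdiff : vnEntropy A - vnEntropy B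
      = ∑ i, (mu (σ₀ i) * Real.log (mu (σ₀ i)) - lam i * Real.log (lam i)) := by
    rw [hHAval, hHBval, hBperm, Finset.sum_sub_distrib]
    ring
  rw [hdiff]
  calc |∑ i, (mu (σ₀ i) * Real.log (mu (σ₀ i)) - lam i * Real.log (lam i))|
      ≤ ∑ i, |mu (σ₀ i) * Real.log (mu (σ₀ i)) - lam i * Real.log (lam i)| :=
        Finset.abs_sum_le_sum_abs _ _
  _ ≤ ∑ _i : Fin k, ε * |Real.log ε| := by
        refine Finset.sum_le_sum fun i _ => ?_
        rw [abs_sub_comm]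
        exact aux_eta_close (hlam0 i) (hlam1 i) (hmu0 (σ₀ i)) (hmu1 (σ₀ i)) hε hε1 (hclose i)
  _ = k * (ε * |Real.log ε|) := by
        rw [Finset.sum_const, Finset.card_univ, Fintype.card_fin, nsmul_eq_mul]
  _ ≤ 3 * k * ε * |Real.log ε| := by
        have h1 : (0:ℝ) ≤ ε * |Real.log ε| := mul_nonneg hε.le (abs_nonneg _)
        have h2 : (1:ℝ) ≤ k := by exact_mod_cast hk
        nlinarith
end

section
/- Let m ≥ 2 be an integer and let X ∈ D_m be a density matrix with largest eigenvalue λ. Then H(X) ≤ −λ ln(λ) − (1−λ) ln( (1−λ)/(m−1) ), i.e. the von Neumann entropy of X is at most the entropy of the probability vector (λ, (1−λ)/(m−1), …, (1−λ)/(m−1)). -/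
open scoped ComplexOrder
open Matrix

/-- trace equals sum of eigenvalues for a Hermitian matrix. -/
lemma my_trace_eq_sum_eig {n : ℕ} {A : Matrix (Fin n) (Fin n) ℂ} (hA : A.IsHermitian) :
    A.trace = ∑ i, (hA.eigenvalues i : ℂ) := by
  have h : star (hA.eigenvectorUnitary : Matrix (Fin n) (Fin n) ℂ) * A *
      (hA.eigenvectorUnitary : Matrix (Fin n) (Fin n) ℂ) =
      Matrix.diagonal (RCLike.ofReal ∘ hA.eigenvalues) :=
    (Unitary.conjStarAlgAut_star_apply (S := ℂ) _ _).symm.trans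
      hA.conjStarAlgAut_star_eigenvectorUnitary
  have hU : (hA.eigenvectorUnitary : Matrix (Fin n) (Fin n) ℂ) *
      star (hA.eigenvectorUnitary : Matrix (Fin n) (Fin n) ℂ) = 1 :=
    (Matrix.mem_unitaryGroup_iff).mp hA.eigenvectorUnitary.2
  calc A.trace = (star (hA.eigenvectorUnitary : Matrix (Fin n) (Fin n) ℂ) * A *
        (hA.eigenvectorUnitary : Matrix (Fin n) (Fin n) ℂ)).trace := by
        rw [Matrix.trace_mul_cycle, hU, one_mul]
    _ = (Matrix.diagonal (RCLike.ofReal ∘ hA.eigenvalues)).trace := by rw [h]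
    _ = ∑ i, (hA.eigenvalues i : ℂ) := by simp [Matrix.trace_diagonal]

/-- if `X` is a density matrix of size `m ≥ 2` with largest eigenvalue `λ`,
then `H(X) ≤ -λ ln λ - (1-λ) ln((1-λ)/(m-1))`. -/
theorem stmt14 (m : ℕ) (hm : 2 ≤ m) (X : Matrix (Fin m) (Fin m) ℂ) (hX : IsDensity X)
    (lam : ℝ) (hlam : IsGreatest (Set.range hX.1.isHermitian.eigenvalues) lam) :
    vnEntropy X ≤ -(lam * Real.log lam) - (1 - lam) * Real.log ((1 - lam) / (m - 1)) := by
  have hH : X.IsHermitian := hX.1.isHermitian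
  set ev := hH.eigenvalues with hev
  have hnn : ∀ i, 0 ≤ ev i := hX.1.eigenvalues_nonneg
  have hsum : ∑ i, ev i = 1 := by
    have h := my_trace_eq_sum_eig hH
    rw [hX.2] at h
    have h2 : ((1 : ℝ) : ℂ) = ((∑ i, ev i : ℝ) : ℂ) := by push_cast; simpa using h
    exact_mod_cast h2.symm
  obtain ⟨i0, hi0⟩ := hlam.1
  have hub : ∀ i, ev i ≤ lam := fun i => hlam.2 ⟨i, rfl⟩
  have hm1 : (0 : ℝ) < (m : ℝ) - 1 := by
    have : (2 : ℝ) ≤ (m : ℝ) := by exact_mod_cast hm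
    linarith
  set t : Finset (Fin m) := Finset.univ.erase i0 with ht
  have hcard : (t.card : ℝ) = (m : ℝ) - 1 := by
    have : t.card = m - 1 := by
      simp [ht, Finset.card_erase_of_mem]
    rw [this, Nat.cast_sub (by omega)]
    simp
  have hst : ∑ i ∈ t, ev i = 1 - lam := by
    have h := Finset.add_sum_erase Finset.univ ev (Finset.mem_univ i0)
    rw [hsum, hi0] at h
    linarith
  -- Jensen
  have hjen : ∑ i ∈ t, ((m : ℝ) - 1)⁻¹ • Real.negMulLog (ev i) ≤
      Real.negMulLog (∑ i ∈ t, ((m : ℝ) - 1)⁻¹ • ev i) := by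
    apply Real.concaveOn_negMulLog.le_map_sum
    · intro i _; positivity
    · rw [Finset.sum_const, nsmul_eq_mul, hcard, mul_inv_cancel₀ hm1.ne']
    · intro i _; exact hnn i
  have hsmul : ∑ i ∈ t, ((m : ℝ) - 1)⁻¹ • ev i = (1 - lam) / ((m : ℝ) - 1) := by
    rw [← Finset.smul_sum, hst, smul_eq_mul]
    ring
  rw [hsmul] at hjen
  have hkey : ∑ i ∈ t, Real.negMulLog (ev i) ≤
      -((1 - lam) * Real.log ((1 - lam) / ((m : ℝ) - 1))) := by
    have h1 : ∑ i ∈ t, Real.negMulLog (ev i) =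
        ((m : ℝ) - 1) * ∑ i ∈ t, ((m : ℝ) - 1)⁻¹ • Real.negMulLog (ev i) := by
      rw [← Finset.smul_sum, smul_eq_mul, ← mul_assoc, mul_inv_cancel₀ hm1.ne', one_mul]
    have h2 : ((m : ℝ) - 1) * Real.negMulLog ((1 - lam) / ((m : ℝ) - 1)) =
        -((1 - lam) * Real.log ((1 - lam) / ((m : ℝ) - 1))) := by
      rw [Real.negMulLog]
      field_simp
    rw [h1, ← h2]
    exact mul_le_mul_of_nonneg_left hjen hm1.le
  have hent : vnEntropy X = ∑ i, Real.negMulLog (ev i) := by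
    rw [vnEntropy, dif_pos hH]
    rw [← Finset.sum_neg_distrib]
    simp [Real.negMulLog, hev]
  rw [hent]
  have hsplit : ∑ i, Real.negMulLog (ev i) =
      Real.negMulLog lam + ∑ i ∈ t, Real.negMulLog (ev i) := by
    rw [← Finset.add_sum_erase Finset.univ _ (Finset.mem_univ i0), hi0]
  rw [hsplit, Real.negMulLog]
  have : (m : ℝ) - 1 = ((m : ℕ) : ℝ) - 1 := rfl
  nlinarith [hkey]
end
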